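/- arXiv:2511.12146 — 7 statements merged into one kernel-verified Lean document; each statement's English description precedes it below -/
import Mathlib

section
/- Let m, p ∈ ℕ and let B_i > 0, β_i > 0 (for i = 1,…,m) and A_j > 0, α_j > 0 (for j = 1,…,p) be real parameters satisfying ∑_{i=1}^m β_i − ∑_{j=1}^p α_j < 1. Then the generalized Wright series Ψ(z) = ∑_{k=0}^∞ (∏_{i=1}^m Γ(B_i + β_i k) / ∏_{j=1}^p Γ(A_j + α_j k)) · z^k / k! is absolutely convergent for every z ∈ ℂ (i.e., the power series has infinite radius of convergence, so Ψ defines an entire function). -/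
open Real Filter

section helpers

lemma wright_gamma_frac_upper {x b : ℝ} (hx : 0 < x) (hb : 0 < b) (hb1 : b < 1) :
    Real.Gamma (x + b) ≤ Real.Gamma x * x ^ b := by
  have hG : 0 < Real.Gamma x := Real.Gamma_pos_of_pos hx
  have h := Real.Gamma_mul_add_mul_le_rpow_Gamma_mul_rpow_Gamma (s := x) (t := x + 1)
    (a := 1 - b) (b := b) hx (by linarith) (by linarith) hb (by ring)
  have h2 : (1 - b) * x + b * (x + 1) = x + b := by ring
  rw [h2, Real.Gamma_add_one hx.ne'] at h
  calc Real.Gamma (x + b) ≤ Real.Gamma x ^ (1 - b) * (x * Real.Gamma x) ^ b := h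
    _ = Real.Gamma x * x ^ b := by
        rw [Real.mul_rpow hx.le hG.le, mul_comm (x ^ b), ← mul_assoc, ← Real.rpow_add hG]
        norm_num

lemma wright_gamma_frac_lower {x b : ℝ} (hx : 0 < x) (hb : 0 < b) (hb1 : b < 1) :
    Real.Gamma x * x ^ b * (x / (x + 1)) ≤ Real.Gamma (x + b) := by
  have hG : 0 < Real.Gamma x := Real.Gamma_pos_of_pos hx
  have hxb : (0:ℝ) < x + b := by linarith
  have hGb : 0 < Real.Gamma (x + b) := Real.Gamma_pos_of_pos hxb
  have h := Real.Gamma_mul_add_mul_le_rpow_Gamma_mul_rpow_Gamma (s := x + b) (t := x + b + 1)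
    (a := b) (b := 1 - b) hxb (by linarith) hb (by linarith) (by ring)
  have h2 : b * (x + b) + (1 - b) * (x + b + 1) = x + 1 := by ring
  rw [h2, Real.Gamma_add_one hxb.ne', Real.Gamma_add_one hx.ne'] at h
  -- h : x * Γ x ≤ Γ(x+b)^b * ((x+b) * Γ(x+b))^(1-b)
  have h3 : Real.Gamma (x+b) ^ b * ((x + b) * Real.Gamma (x+b)) ^ (1 - b)
      = Real.Gamma (x + b) * (x + b) ^ (1 - b) := by
    rw [Real.mul_rpow hxb.le hGb.le, mul_comm ((x+b) ^ (1-b)), ← mul_assoc,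
      ← Real.rpow_add hGb]
    norm_num
  rw [h3] at h
  -- key : x ^ b * (x+b)^(1-b) ≤ x + 1
  have key : x ^ b * (x + b) ^ (1 - b) ≤ x + 1 := by
    have h4 : x ^ b ≤ (x + b) ^ b := Real.rpow_le_rpow hx.le (by linarith) hb.le
    calc x ^ b * (x + b) ^ (1 - b) ≤ (x + b) ^ b * (x + b) ^ (1 - b) := by
          exact mul_le_mul_of_nonneg_right h4 (Real.rpow_nonneg hxb.le _)
      _ = x + b := by rw [← Real.rpow_add hxb]; norm_num
      _ ≤ x + 1 := by linarith
  -- goal: Γ x * x^b * (x/(x+1)) ≤ Γ(x+b)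
  rw [← mul_div_assoc, div_le_iff₀ (by linarith : (0:ℝ) < x + 1)]
  nlinarith [mul_le_mul_of_nonneg_left h (Real.rpow_nonneg hx.le b),
    mul_le_mul_of_nonneg_left key hGb.le]


lemma wright_gamma_ratio_upper_aux : ∀ n : ℕ, ∀ b : ℝ, 0 < b → b ≤ n → ∀ x : ℝ, 0 < x →
    Real.Gamma (x + b) ≤ Real.Gamma x * (x + b) ^ b := by
  intro n
  induction n with
  | zero => intro b hb hbn x hx; exfalso; norm_num at hbn; linarith
  | succ n ih =>
    intro b hb hbn x hx
    have hG : 0 < Real.Gamma x := Real.Gamma_pos_of_pos hx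
    have hxb : (0:ℝ) < x + b := by linarith
    rcases lt_trichotomy b 1 with h1 | h1 | h1
    · calc Real.Gamma (x + b) ≤ Real.Gamma x * x ^ b := wright_gamma_frac_upper hx hb h1
        _ ≤ Real.Gamma x * (x + b) ^ b :=
            mul_le_mul_of_nonneg_left (Real.rpow_le_rpow hx.le (by linarith) hb.le) hG.le
    · subst h1
      rw [Real.Gamma_add_one hx.ne', Real.rpow_one]
      nlinarith
    · have hb' : (0:ℝ) < b - 1 := by linarith
      have hbn' : b - 1 ≤ (n : ℝ) := by push_cast at hbn; linarith
      have h := ih (b - 1) hb' hbn' x hx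
      have hxb' : (0:ℝ) < x + (b - 1) := by linarith
      have e1 : x + b = x + (b - 1) + 1 := by ring
      rw [e1, Real.Gamma_add_one hxb'.ne']
      have e2 : x + (b - 1) + 1 = x + b := by ring
      rw [e2]
      have h4 : (x + (b-1)) ^ (b-1) ≤ (x + b) ^ (b-1) :=
        Real.rpow_le_rpow hxb'.le (by linarith) (by linarith)
      have h5 : (x + b) ^ (b - 1) * (x + b) = (x + b) ^ b := by
        rw [← Real.rpow_add_one hxb.ne' (b - 1)]; norm_num
      calc (x + (b-1)) * Real.Gamma (x + (b-1))
          ≤ (x + b) * (Real.Gamma x * (x + b) ^ (b-1)) := by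
            refine mul_le_mul (by linarith) (h.trans ?_) (Real.Gamma_pos_of_pos hxb').le (by linarith)
            exact mul_le_mul_of_nonneg_left h4 hG.le
        _ = Real.Gamma x * (x + b) ^ b := by rw [← h5]; ring

lemma wright_gamma_ratio_lower_aux : ∀ n : ℕ, ∀ b : ℝ, 0 < b → b ≤ n → ∀ x : ℝ, 0 < x →
    Real.Gamma x * x ^ b * (x / (x + 1)) ≤ Real.Gamma (x + b) := by
  intro n
  induction n with
  | zero => intro b hb hbn x hx; exfalso; norm_num at hbn; linarith
  | succ n ih =>
    intro b hb hbn x hx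
    have hG : 0 < Real.Gamma x := Real.Gamma_pos_of_pos hx
    rcases lt_trichotomy b 1 with h1 | h1 | h1
    · exact wright_gamma_frac_lower hx hb h1
    · subst h1
      rw [Real.Gamma_add_one hx.ne', Real.rpow_one]
      have hd : x / (x + 1) ≤ 1 := by
        rw [div_le_one (by linarith)]; linarith
      nlinarith [mul_le_mul_of_nonneg_left hd (by positivity : (0:ℝ) ≤ Real.Gamma x * x)]
    · have hb' : (0:ℝ) < b - 1 := by linarith
      have hbn' : b - 1 ≤ (n : ℝ) := by push_cast at hbn; linarith
      have h := ih (b - 1) hb' hbn' x hx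
      have hxb' : (0:ℝ) < x + (b - 1) := by linarith
      have e1 : x + b = x + (b - 1) + 1 := by ring
      rw [e1, Real.Gamma_add_one hxb'.ne']
      have h5 : x ^ (b - 1) * x = x ^ b := by
        rw [← Real.rpow_add_one hx.ne' (b - 1)]; norm_num
      have hx1 : (0:ℝ) < x / (x + 1) := by positivity
      calc Real.Gamma x * x ^ b * (x / (x+1))
          = x * (Real.Gamma x * x ^ (b-1) * (x / (x+1))) := by rw [← h5]; ring
        _ ≤ (x + (b-1)) * Real.Gamma (x + (b-1)) := by
            refine mul_le_mul (by linarith) h ?_ (by linarith)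
            positivity

lemma wright_gamma_ratio_upper {x b : ℝ} (hx : 0 < x) (hb : 0 < b) :
    Real.Gamma (x + b) ≤ Real.Gamma x * (x + b) ^ b :=
  wright_gamma_ratio_upper_aux ⌈b⌉₊ b hb (Nat.le_ceil b) x hx

lemma wright_gamma_ratio_lower {x b : ℝ} (hx : 0 < x) (hb : 0 < b) :
    Real.Gamma x * x ^ b * (x / (x + 1)) ≤ Real.Gamma (x + b) :=
  wright_gamma_ratio_lower_aux ⌈b⌉₊ b hb (Nat.le_ceil b) x hx

end helpers

open MeasureTheory

set_option maxHeartbeats 1000000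

/-- The generalized Wright series is absolutely convergent for every `z ∈ ℂ`
(infinite radius of convergence), provided `∑ βᵢ - ∑ αⱼ < 1`. -/
theorem generalized_wright_series_abs_convergent
    (m p : ℕ) (B β : Fin m → ℝ) (A α : Fin p → ℝ)
    (hB : ∀ i, 0 < B i) (hβ : ∀ i, 0 < β i)
    (hA : ∀ j, 0 < A j) (hα : ∀ j, 0 < α j)
    (hconv : (∑ i, β i) - (∑ j, α j) < 1) (z : ℂ) :
    Summable (fun k : ℕ =>
      ‖(((∏ i, Real.Gamma (B i + β i * k)) / (∏ j, Real.Gamma (A j + α j * k)) : ℝ) : ℂ)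
        * z ^ k / (Nat.factorial k : ℂ)‖) := by
  set F : ℕ → ℂ := fun k =>
    (((∏ i, Real.Gamma (B i + β i * k)) / (∏ j, Real.Gamma (A j + α j * k)) : ℝ) : ℂ)
      * z ^ k / (Nat.factorial k : ℂ) with hFdef
  set σ : ℝ := (∑ i, β i) - (∑ j, α j) - 1 with hσdef
  have hσneg : σ < 0 := by simp only [hσdef]; linarith
  set Cβ : ℝ := ∏ i, (B i + β i) ^ (β i) with hCβdef
  set Cα : ℝ := ∏ j, (min (A j) (α j)) ^ (α j) * (min (A j) (α j)) / (A j + α j + 1)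
    with hCαdef
  have hCβ0 : 0 < Cβ := Finset.prod_pos fun i _ =>
    Real.rpow_pos_of_pos (by have := hB i; have := hβ i; linarith) _
  have hCα0 : 0 < Cα := Finset.prod_pos fun j _ => by
    have h1 : 0 < min (A j) (α j) := lt_min (hA j) (hα j)
    have h2 := hA j; have h3 := hα j
    positivity
  set C : ℝ := Cβ / Cα * ‖z‖ with hCdef
  have hC0 : 0 ≤ C := by positivity
  have hP : ∀ k : ℕ, 0 < ∏ i, Real.Gamma (B i + β i * k) := fun k =>
    Finset.prod_pos fun i _ => Real.Gamma_pos_of_pos (by have := hB i; have := hβ i; positivity)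
  have hQ : ∀ k : ℕ, 0 < ∏ j, Real.Gamma (A j + α j * k) := fun k =>
    Finset.prod_pos fun j _ => Real.Gamma_pos_of_pos (by have := hA j; have := hα j; positivity)
  have hnorm : ∀ k : ℕ, ‖F k‖ =
      (∏ i, Real.Gamma (B i + β i * k)) / (∏ j, Real.Gamma (A j + α j * k))
        * ‖z‖ ^ k / (Nat.factorial k : ℝ) := by
    intro k
    rw [hFdef]
    rw [norm_div, norm_mul, Complex.norm_real, Complex.norm_natCast, norm_pow,
      Real.norm_of_nonneg (div_pos (hP k) (hQ k)).le]
  -- key multiplicative step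
  have key : ∀ k : ℕ, ‖F (k + 1)‖ ≤ (C * ((k : ℝ) + 1) ^ σ) * ‖F k‖ := by
    intro k
    set N : ℝ := (k : ℝ) + 1 with hNdef
    have hN : (0 : ℝ) < N := by positivity
    -- numerator bound
    have hnum : (∏ i, Real.Gamma (B i + β i * ((k : ℝ) + 1)))
        ≤ (∏ i, Real.Gamma (B i + β i * k)) * (Cβ * N ^ (∑ i, β i)) := by
      have step : ∀ i ∈ Finset.univ, Real.Gamma (B i + β i * ((k : ℝ) + 1))
          ≤ Real.Gamma (B i + β i * k) * ((B i + β i) ^ (β i) * N ^ (β i)) := by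
        intro i _
        have hBi := hB i; have hβi := hβ i
        have hx : (0 : ℝ) < B i + β i * k := by positivity
        have e : B i + β i * ((k : ℝ) + 1) = (B i + β i * k) + β i := by ring
        rw [e]
        refine (wright_gamma_ratio_upper hx hβi).trans ?_
        rw [← Real.mul_rpow (by positivity) hN.le]
        refine mul_le_mul_of_nonneg_left ?_ (Real.Gamma_pos_of_pos hx).le
        refine Real.rpow_le_rpow (by positivity) ?_ hβi.le
        rw [hNdef]; nlinarith [Nat.cast_nonneg (α := ℝ) k]
      calc (∏ i, Real.Gamma (B i + β i * ((k : ℝ) + 1)))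
          ≤ ∏ i, Real.Gamma (B i + β i * k) * ((B i + β i) ^ (β i) * N ^ (β i)) :=
            Finset.prod_le_prod (fun i _ => (Real.Gamma_pos_of_pos (by
              have := hB i; have := hβ i; positivity)).le) step
        _ = (∏ i, Real.Gamma (B i + β i * k)) * (Cβ * N ^ (∑ i, β i)) := by
            rw [Finset.prod_mul_distrib, Finset.prod_mul_distrib,
              ← Real.rpow_sum_of_pos hN]
    -- denominator bound
    have hden : (∏ j, Real.Gamma (A j + α j * k)) * (Cα * N ^ (∑ j, α j))
        ≤ ∏ j, Real.Gamma (A j + α j * ((k : ℝ) + 1)) := by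
      have step : ∀ j ∈ Finset.univ, Real.Gamma (A j + α j * k) *
          ((min (A j) (α j)) ^ (α j) * (min (A j) (α j)) / (A j + α j + 1) * N ^ (α j))
          ≤ Real.Gamma (A j + α j * ((k : ℝ) + 1)) := by
        intro j _
        have hAj := hA j; have hαj := hα j
        have hc : (0 : ℝ) < min (A j) (α j) := lt_min hAj hαj
        have hy : (0 : ℝ) < A j + α j * k := by positivity
        have e : A j + α j * ((k : ℝ) + 1) = (A j + α j * k) + α j := by ring
        rw [e]
        refine le_trans ?_ (wright_gamma_ratio_lower hy hαj)
        have hy1 : min (A j) (α j) * N ≤ A j + α j * k := by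
          rw [hNdef]
          nlinarith [min_le_left (A j) (α j), min_le_right (A j) (α j),
            Nat.cast_nonneg (α := ℝ) k]
        have h1 : (min (A j) (α j)) ^ (α j) * N ^ (α j) ≤ (A j + α j * k) ^ (α j) := by
          rw [← Real.mul_rpow hc.le hN.le]
          exact Real.rpow_le_rpow (by positivity) hy1 hαj.le
        have h2 : min (A j) (α j) / (A j + α j + 1)
            ≤ (A j + α j * k) / (A j + α j * k + 1) := by
          rw [div_le_div_iff₀ (by positivity) (by positivity)]
          have hup : A j + α j * k + 1 ≤ (A j + α j + 1) * N := by
            rw [hNdef]; nlinarith [Nat.cast_nonneg (α := ℝ) k]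
          calc min (A j) (α j) * (A j + α j * k + 1)
              ≤ min (A j) (α j) * ((A j + α j + 1) * N) :=
                mul_le_mul_of_nonneg_left hup hc.le
            _ = (min (A j) (α j) * N) * (A j + α j + 1) := by ring
            _ ≤ (A j + α j * k) * (A j + α j + 1) :=
                mul_le_mul_of_nonneg_right hy1 (by positivity)
        calc Real.Gamma (A j + α j * k) *
            ((min (A j) (α j)) ^ (α j) * (min (A j) (α j)) / (A j + α j + 1) * N ^ (α j))
            = Real.Gamma (A j + α j * k) * ((min (A j) (α j)) ^ (α j) * N ^ (α j)) *
              (min (A j) (α j) / (A j + α j + 1)) := by ring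
          _ ≤ Real.Gamma (A j + α j * k) * (A j + α j * k) ^ (α j) *
              ((A j + α j * k) / (A j + α j * k + 1)) := by
              have hG := Real.Gamma_pos_of_pos hy
              refine mul_le_mul ?_ h2 (by positivity) (by positivity)
              exact mul_le_mul_of_nonneg_left h1 hG.le
      calc (∏ j, Real.Gamma (A j + α j * k)) * (Cα * N ^ (∑ j, α j))
          = ∏ j, Real.Gamma (A j + α j * k) *
              ((min (A j) (α j)) ^ (α j) * (min (A j) (α j)) / (A j + α j + 1) * N ^ (α j)) := by
            rw [Finset.prod_mul_distrib, Finset.prod_mul_distrib,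
              ← Real.rpow_sum_of_pos hN]
        _ ≤ ∏ j, Real.Gamma (A j + α j * ((k : ℝ) + 1)) := Finset.prod_le_prod
            (fun j _ => by
              have hc : (0 : ℝ) < min (A j) (α j) := lt_min (hA j) (hα j)
              have := hA j; have := hα j
              have hG := Real.Gamma_pos_of_pos (show (0:ℝ) < A j + α j * k by positivity)
              positivity) step
    -- put everything together
    rw [hnorm k, hnorm (k + 1)]
    push_cast
    have hfac : ((k : ℝ) + 1) * (Nat.factorial k : ℝ) = ((Nat.factorial (k + 1) : ℝ)) := by
      push_cast [Nat.factorial_succ]; ring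
    have hsplit : N ^ ((∑ i, β i)) = N ^ σ * N ^ (∑ j, α j) * N := by
      have e : (∑ i, β i) = σ + (∑ j, α j) + 1 := by rw [hσdef]; ring
      rw [e, Real.rpow_add hN, Real.rpow_add hN, Real.rpow_one]
    have hzpow : ‖z‖ ^ (k + 1) = ‖z‖ ^ k * ‖z‖ := pow_succ _ _
    calc (∏ i, Real.Gamma (B i + β i * ((k:ℝ) + 1))) /
          (∏ j, Real.Gamma (A j + α j * ((k:ℝ) + 1))) * ‖z‖ ^ (k+1) / (Nat.factorial (k+1) : ℝ)
        ≤ ((∏ i, Real.Gamma (B i + β i * k)) * (Cβ * N ^ (∑ i, β i))) /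
          ((∏ j, Real.Gamma (A j + α j * k)) * (Cα * N ^ (∑ j, α j)))
            * ‖z‖ ^ (k+1) / (Nat.factorial (k+1) : ℝ) := by
          have hQ' : (0:ℝ) < (∏ j, Real.Gamma (A j + α j * k)) * (Cα * N ^ (∑ j, α j)) := by
            have := hQ k; positivity
          have h1 : (∏ i, Real.Gamma (B i + β i * ((k:ℝ) + 1))) /
              (∏ j, Real.Gamma (A j + α j * ((k:ℝ) + 1)))
              ≤ ((∏ i, Real.Gamma (B i + β i * k)) * (Cβ * N ^ (∑ i, β i))) /
              ((∏ j, Real.Gamma (A j + α j * k)) * (Cα * N ^ (∑ j, α j))) :=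
            div_le_div₀ (by have := hP k; positivity) hnum hQ' hden
          exact div_le_div_of_nonneg_right (mul_le_mul_of_nonneg_right h1 (by positivity)) (by positivity)
      _ = (C * N ^ σ) * ((∏ i, Real.Gamma (B i + β i * k)) /
            (∏ j, Real.Gamma (A j + α j * k)) * ‖z‖ ^ k / (Nat.factorial k : ℝ)) := by
          rw [hsplit, hzpow, ← hfac, hCdef]
          have h1 := (hQ k).ne'
          have h2 := hCα0.ne'
          have h3 : (N : ℝ) ≠ 0 := hN.ne'
          have h4 : N ^ (∑ j, α j) ≠ 0 := (Real.rpow_pos_of_pos hN _).ne'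
          have h5 : (Nat.factorial k : ℝ) ≠ 0 := by positivity
          field_simp
          rw [hNdef]
          rw [show (∏ x, Real.Gamma (B x + (k:ℝ) * β x)) = ∏ x, Real.Gamma (B x + β x * (k:ℝ)) from
            Finset.prod_congr rfl fun x _ => by congr 1; ring]
          ring
  have hten : Filter.Tendsto (fun k : ℕ => C * ((k : ℝ) + 1) ^ σ) Filter.atTop (nhds 0) := by
    have h0 : Filter.Tendsto (fun x : ℝ => x ^ σ) Filter.atTop (nhds 0) := by
      have := tendsto_rpow_neg_atTop (show (0:ℝ) < -σ by linarith)
      simpa using this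
    have hNk : Filter.Tendsto (fun k : ℕ => (k : ℝ) + 1) Filter.atTop Filter.atTop :=
      Filter.tendsto_atTop_add_const_right _ 1 tendsto_natCast_atTop_atTop
    simpa using (h0.comp hNk).const_mul C
  have hev : ∀ᶠ k : ℕ in Filter.atTop, C * ((k : ℝ) + 1) ^ σ ≤ 1 / 2 :=
    hten.eventually (eventually_le_nhds (by norm_num))
  refine summable_of_ratio_norm_eventually_le (r := 1/2) (by norm_num) ?_
  filter_upwards [hev] with k hk
  simp only [norm_norm]
  exact (key k).trans (mul_le_mul_of_nonneg_right hk (norm_nonneg _))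
end

section
/- Let m, p ∈ ℕ and let B_i > 0, β_i > 0 (for i = 1,…,m) and A_j > 0, α_j > 0 (for j = 1,…,p) be real parameters satisfying ∑_{i=1}^m β_i − ∑_{j=1}^p α_j < 1. Then for every x ∈ ℝ, the function x ↦ ∑_{k=0}^∞ (∏_{i=1}^m Γ(B_i + β_i k) / ∏_{j=1}^p Γ(A_j + α_j k)) x^k / k! is differentiable at x with derivative ∑_{k=0}^∞ (∏_{i=1}^m Γ(B_i + β_i + β_i k) / ∏_{j=1}^p Γ(A_j + α_j + α_j k)) x^k / k!; that is, the derivative of the generalized Wright function with parameters (B_i, β_i), (A_j, α_j) is the generalized Wright function with shifted parameters (B_i + β_i, β_i), (A_j + α_j, α_j). -/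
open MeasureTheory

section WrightAux

open Real Set Filter Finset

lemma gamma_frac_upper {z s : ℝ} (hz : 0 < z) (hs0 : 0 ≤ s) (hs1 : s ≤ 1) :
    Real.Gamma (z + s) ≤ Real.Gamma z * z ^ s := by
  have h1 : (0:ℝ) < z + 1 := by linarith
  have hmem : z ∈ Ioi (0:ℝ) := hz
  have hmem1 : z + 1 ∈ Ioi (0:ℝ) := h1
  have hcvx := Real.convexOn_log_Gamma.2 hmem hmem1 (by linarith : (0:ℝ) ≤ 1 - s) hs0 (by ring)
  simp only [smul_eq_mul, Function.comp_apply] at hcvx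
  have harg : (1 - s) * z + s * (z + 1) = z + s := by ring
  rw [harg] at hcvx
  have hGz : 0 < Real.Gamma z := Real.Gamma_pos_of_pos hz
  have hGz1 : Real.Gamma (z + 1) = z * Real.Gamma z := Real.Gamma_add_one hz.ne'
  have hGzs : 0 < Real.Gamma (z + s) := Real.Gamma_pos_of_pos (by linarith)
  calc Real.Gamma (z + s) = Real.exp (Real.log (Real.Gamma (z + s))) := (Real.exp_log hGzs).symm
    _ ≤ Real.exp ((1 - s) * Real.log (Real.Gamma z) + s * Real.log (Real.Gamma (z + 1))) :=
        Real.exp_le_exp.mpr hcvx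
    _ = Real.Gamma z ^ (1 - s) * Real.Gamma (z + 1) ^ s := by
        rw [Real.exp_add, Real.rpow_def_of_pos hGz, Real.rpow_def_of_pos (by rw [hGz1]; positivity),
          mul_comm (Real.log _), mul_comm (Real.log _)]
    _ = Real.Gamma z * z ^ s := by
        rw [hGz1, Real.mul_rpow hz.le hGz.le, mul_comm (z ^ s), ← mul_assoc,
          ← Real.rpow_add hGz]
        norm_num

lemma gamma_frac_lower {z s : ℝ} (hz : 1 ≤ z) (hs0 : 0 ≤ s) (hs1 : s ≤ 1) :
    Real.Gamma z * z ^ s ≤ 2 * Real.Gamma (z + s) := by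
  have hz0 : (0:ℝ) < z := lt_of_lt_of_le one_pos hz
  have hzs : (0:ℝ) < z + s := by linarith
  have hmem : z + s ∈ Ioi (0:ℝ) := hzs
  have hmem1 : z + s + 1 ∈ Ioi (0:ℝ) := by simp only [Set.mem_Ioi]; linarith
  have hcvx := Real.convexOn_log_Gamma.2 hmem hmem1 hs0 (by linarith : (0:ℝ) ≤ 1 - s) (by ring)
  simp only [smul_eq_mul, Function.comp_apply] at hcvx
  have harg : s * (z + s) + (1 - s) * (z + s + 1) = z + 1 := by ring
  rw [harg] at hcvx
  have hGzs : 0 < Real.Gamma (z + s) := Real.Gamma_pos_of_pos hzs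
  have hGz : 0 < Real.Gamma z := Real.Gamma_pos_of_pos hz0
  have hGrec : Real.Gamma (z + s + 1) = (z + s) * Real.Gamma (z + s) :=
    Real.Gamma_add_one hzs.ne'
  have key : Real.Gamma (z + 1) ≤ Real.Gamma (z + s) * (z + s) ^ (1 - s) := by
    calc Real.Gamma (z + 1) = Real.exp (Real.log (Real.Gamma (z + 1))) :=
          (Real.exp_log (Real.Gamma_pos_of_pos (by linarith))).symm
      _ ≤ Real.exp (s * Real.log (Real.Gamma (z + s)) + (1 - s) * Real.log (Real.Gamma (z + s + 1))) :=
          Real.exp_le_exp.mpr hcvx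
      _ = Real.Gamma (z + s) ^ s * Real.Gamma (z + s + 1) ^ (1 - s) := by
          rw [Real.exp_add, Real.rpow_def_of_pos hGzs,
            Real.rpow_def_of_pos (by rw [hGrec]; positivity),
            mul_comm (Real.log _), mul_comm (Real.log _)]
      _ = Real.Gamma (z + s) * (z + s) ^ (1 - s) := by
          rw [hGrec, Real.mul_rpow hzs.le hGzs.le, mul_comm ((z + s) ^ (1 - s)), ← mul_assoc,
            ← Real.rpow_add hGzs]
          norm_num
  have h2b : (2:ℝ) ^ (1 - s) ≤ 2 := by
    calc (2:ℝ) ^ (1 - s) ≤ 2 ^ (1:ℝ) :=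
          Real.rpow_le_rpow_of_exponent_le (by norm_num) (by linarith)
      _ = 2 := Real.rpow_one 2
  have h2 : (z + s) ^ (1 - s) ≤ 2 * z ^ (1 - s) := by
    calc (z + s) ^ (1 - s) ≤ (2 * z) ^ (1 - s) :=
          Real.rpow_le_rpow hzs.le (by linarith) (by linarith)
      _ = 2 ^ (1 - s) * z ^ (1 - s) := Real.mul_rpow (by norm_num) hz0.le
      _ ≤ 2 * z ^ (1 - s) :=
          mul_le_mul_of_nonneg_right h2b (Real.rpow_pos_of_pos hz0 _).le
  have hz1 : Real.Gamma (z + 1) = z * Real.Gamma z := Real.Gamma_add_one hz0.ne'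
  have key2 : z * Real.Gamma z ≤ 2 * Real.Gamma (z + s) * z ^ (1 - s) := by
    calc z * Real.Gamma z = Real.Gamma (z + 1) := hz1.symm
      _ ≤ Real.Gamma (z + s) * (z + s) ^ (1 - s) := key
      _ ≤ Real.Gamma (z + s) * (2 * z ^ (1 - s)) := by gcongr
      _ = 2 * Real.Gamma (z + s) * z ^ (1 - s) := by ring
  have this2 := mul_le_mul_of_nonneg_right key2 (Real.rpow_pos_of_pos hz0 (s - 1)).le
  have hzs' : z ^ s = z * z ^ (s - 1) := by
    have h : z ^ s = z ^ (1 + (s - 1)) := by norm_num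
    rw [h, Real.rpow_add hz0, Real.rpow_one]
  calc Real.Gamma z * z ^ s = z * Real.Gamma z * z ^ (s - 1) := by rw [hzs']; ring
    _ ≤ 2 * Real.Gamma (z + s) * z ^ (1 - s) * z ^ (s - 1) := this2
    _ = 2 * Real.Gamma (z + s) := by
        rw [mul_assoc, ← Real.rpow_add hz0]
        norm_num

lemma gamma_frac_upper_gen {z b : ℝ} (hz : 0 < z) (hb : 0 < b) :
    Real.Gamma (z + b) ≤ Real.Gamma z * (z + b) ^ b := by
  have main : ∀ n : ℕ, ∀ b : ℝ, 0 < b → b ≤ n → ∀ z : ℝ, 0 < z →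
      Real.Gamma (z + b) ≤ Real.Gamma z * (z + b) ^ b := by
    intro n
    induction n with
    | zero => intro b hb hbn z hz; exfalso; exact absurd (hb.trans_le hbn) (by norm_num)
    | succ n ih =>
      intro b hb hbn z hz
      by_cases hb1 : b ≤ 1
      · calc Real.Gamma (z + b) ≤ Real.Gamma z * z ^ b := gamma_frac_upper hz hb.le hb1
          _ ≤ Real.Gamma z * (z + b) ^ b :=
              mul_le_mul_of_nonneg_left (Real.rpow_le_rpow hz.le (by linarith) hb.le)
                (Real.Gamma_pos_of_pos hz).le
      · push_neg at hb1
        have hb1' : 0 < b - 1 := by linarith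
        have hbn' : b - 1 ≤ n := by push_cast at hbn ⊢; linarith
        have hzb1 : (0:ℝ) < z + (b - 1) := by linarith
        have ihb := ih (b - 1) hb1' hbn' z hz
        have hrec : Real.Gamma (z + b) = (z + (b - 1)) * Real.Gamma (z + (b - 1)) := by
          rw [← Real.Gamma_add_one hzb1.ne']
          ring_nf
        rw [hrec]
        calc (z + (b - 1)) * Real.Gamma (z + (b - 1))
            ≤ (z + (b - 1)) * (Real.Gamma z * (z + (b - 1)) ^ (b - 1)) := by
              gcongr
          _ = Real.Gamma z * ((z + (b - 1)) * (z + (b - 1)) ^ (b - 1)) := by ring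
          _ = Real.Gamma z * (z + (b - 1)) ^ b := by
              have h : (z + (b - 1)) ^ b = (z + (b - 1)) * (z + (b - 1)) ^ (b - 1) := by
                have h2 : (z + (b - 1)) ^ b = (z + (b - 1)) ^ (1 + (b - 1)) := by norm_num
                rw [h2, Real.rpow_add hzb1, Real.rpow_one]
              rw [h]
          _ ≤ Real.Gamma z * (z + b) ^ b :=
              mul_le_mul_of_nonneg_left (Real.rpow_le_rpow hzb1.le (by linarith) hb.le)
                (Real.Gamma_pos_of_pos hz).le
  exact main ⌈b⌉₊ b hb (Nat.le_ceil b) z hz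

lemma gamma_frac_lower_gen {z a : ℝ} (hz : 1 ≤ z) (ha : 0 < a) :
    Real.Gamma z * z ^ a ≤ 2 * Real.Gamma (z + a) := by
  have main : ∀ n : ℕ, ∀ a : ℝ, 0 < a → a ≤ n → ∀ z : ℝ, 1 ≤ z →
      Real.Gamma z * z ^ a ≤ 2 * Real.Gamma (z + a) := by
    intro n
    induction n with
    | zero => intro a ha han z hz; exfalso; exact absurd (ha.trans_le han) (by norm_num)
    | succ n ih =>
      intro a ha han z hz
      have hz0 : (0:ℝ) < z := lt_of_lt_of_le one_pos hz
      by_cases ha1 : a ≤ 1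
      · exact gamma_frac_lower hz ha.le ha1
      · push_neg at ha1
        have ha1' : 0 < a - 1 := by linarith
        have han' : a - 1 ≤ n := by push_cast at han ⊢; linarith
        have hza1 : (0:ℝ) < z + (a - 1) := by linarith
        have iha := ih (a - 1) ha1' han' z hz
        have hrec : Real.Gamma (z + a) = (z + (a - 1)) * Real.Gamma (z + (a - 1)) := by
          rw [← Real.Gamma_add_one hza1.ne']
          ring_nf
        have hza : z ^ a = z * z ^ (a - 1) := by
          have h : z ^ a = z ^ (1 + (a - 1)) := by norm_num
          rw [h, Real.rpow_add hz0, Real.rpow_one]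
        rw [hrec, hza]
        calc Real.Gamma z * (z * z ^ (a - 1)) = z * (Real.Gamma z * z ^ (a - 1)) := by ring
          _ ≤ z * (2 * Real.Gamma (z + (a - 1))) := by
              gcongr
          _ = 2 * (z * Real.Gamma (z + (a - 1))) := by ring
          _ ≤ 2 * ((z + (a - 1)) * Real.Gamma (z + (a - 1))) := by
              have := mul_le_mul_of_nonneg_right (by linarith : z ≤ z + (a - 1))
                (Real.Gamma_pos_of_pos hza1).le
              linarith
  exact main ⌈a⌉₊ a ha (Nat.le_ceil a) z hz

lemma wright_summable (m p : ℕ) (B β : Fin m → ℝ) (A α : Fin p → ℝ)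
    (hB : ∀ i, 0 < B i) (hβ : ∀ i, 0 < β i)
    (hA : ∀ j, 0 < A j) (hα : ∀ j, 0 < α j)
    (hconv : (∑ i, β i) - (∑ j, α j) < 1) (R : ℝ) :
    Summable (fun k : ℕ =>
      ((∏ i, Real.Gamma (B i + β i * k)) / (∏ j, Real.Gamma (A j + α j * k)))
        * R ^ k / (Nat.factorial k : ℝ)) := by
  have hP : ∀ k : ℕ, 0 < ∏ i, Real.Gamma (B i + β i * k) := fun k =>
    Finset.prod_pos fun i _ => Real.Gamma_pos_of_pos (by have := hB i; have := hβ i; positivity)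
  have hQ : ∀ k : ℕ, 0 < ∏ j, Real.Gamma (A j + α j * k) := fun k =>
    Finset.prod_pos fun j _ => Real.Gamma_pos_of_pos (by have := hA j; have := hα j; positivity)
  set Cn := ∏ i, (B i + 2 * β i) ^ (β i) with hCn
  set Cd := ∏ j, (min (A j) (α j)) ^ (α j) with hCd
  have hCnpos : 0 < Cn := Finset.prod_pos fun i _ =>
    Real.rpow_pos_of_pos (by have := hB i; have := hβ i; positivity) _
  have hCdpos : 0 < Cd := Finset.prod_pos fun j _ =>
    Real.rpow_pos_of_pos (lt_min (hA j) (hα j)) _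
  set KK := 2 ^ p * Cn / Cd with hKK
  have hKKpos : 0 < KK := by positivity
  -- numerator upper bound
  have hupper : ∀ k : ℕ,
      (∏ i, Real.Gamma (B i + β i * ((k:ℝ) + 1)))
        ≤ (∏ i, Real.Gamma (B i + β i * k)) * Cn * ((k:ℝ) + 1) ^ (∑ i, β i) := by
    intro k
    have step : ∀ i : Fin m, Real.Gamma (B i + β i * ((k:ℝ) + 1))
        ≤ Real.Gamma (B i + β i * k) * ((B i + 2 * β i) ^ (β i) * ((k:ℝ) + 1) ^ (β i)) := by
      intro i
      have hz : (0:ℝ) < B i + β i * k := by have := hB i; have := hβ i; positivity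
      have harg : B i + β i * ((k:ℝ) + 1) = (B i + β i * k) + β i := by ring
      rw [harg]
      calc Real.Gamma ((B i + β i * k) + β i)
          ≤ Real.Gamma (B i + β i * k) * ((B i + β i * k) + β i) ^ (β i) :=
            gamma_frac_upper_gen hz (hβ i)
        _ ≤ Real.Gamma (B i + β i * k) * ((B i + 2 * β i) * ((k:ℝ) + 1)) ^ (β i) := by
            refine mul_le_mul_of_nonneg_left ?_ (Real.Gamma_pos_of_pos hz).le
            refine Real.rpow_le_rpow (by linarith [hz, (hβ i)]) ?_ (hβ i).le
            have hk : (0:ℝ) ≤ k := Nat.cast_nonneg k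
            have := hB i; have := hβ i
            nlinarith
        _ = Real.Gamma (B i + β i * k) * ((B i + 2 * β i) ^ (β i) * ((k:ℝ) + 1) ^ (β i)) := by
            rw [Real.mul_rpow (by have := hB i; have := hβ i; positivity) (by positivity)]
    calc (∏ i, Real.Gamma (B i + β i * ((k:ℝ) + 1)))
        ≤ ∏ i, Real.Gamma (B i + β i * k) * ((B i + 2 * β i) ^ (β i) * ((k:ℝ) + 1) ^ (β i)) :=
          Finset.prod_le_prod (fun i _ =>
            (Real.Gamma_pos_of_pos (by have := hB i; have := hβ i; positivity)).le)
            (fun i _ => step i)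
      _ = (∏ i, Real.Gamma (B i + β i * k)) * Cn * ((k:ℝ) + 1) ^ (∑ i, β i) := by
          rw [Finset.prod_mul_distrib, Finset.prod_mul_distrib,
            Real.rpow_sum_of_pos (by positivity : (0:ℝ) < (k:ℝ) + 1) β Finset.univ]
          ring
  -- denominator lower bound (eventually)
  have hge1 : ∀ᶠ k : ℕ in atTop, ∀ j, 1 ≤ A j + α j * k := by
    refine Filter.eventually_all.mpr fun j => ?_
    filter_upwards [Filter.eventually_ge_atTop ⌈1 / α j⌉₊] with k hk
    have h1 : (1:ℝ) / α j ≤ k := le_trans (Nat.le_ceil _) (Nat.cast_le.mpr hk)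
    have h2 : (1:ℝ) ≤ α j * k := by
      rw [div_le_iff₀ (hα j)] at h1
      linarith [mul_comm (α j) (k:ℝ)]
    have := hA j
    linarith
  have hlower : ∀ k : ℕ, (∀ j, 1 ≤ A j + α j * k) →
      (∏ j, Real.Gamma (A j + α j * k)) * Cd * ((k:ℝ) + 1) ^ (∑ j, α j)
        ≤ 2 ^ p * ∏ j, Real.Gamma (A j + α j * ((k:ℝ) + 1)) := by
    intro k hk1
    have step : ∀ j : Fin p,
        Real.Gamma (A j + α j * k) * ((min (A j) (α j)) ^ (α j) * ((k:ℝ) + 1) ^ (α j))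
          ≤ 2 * Real.Gamma (A j + α j * ((k:ℝ) + 1)) := by
      intro j
      have hz : (0:ℝ) < A j + α j * k := by have := hA j; have := hα j; positivity
      have harg : A j + α j * ((k:ℝ) + 1) = (A j + α j * k) + α j := by ring
      rw [harg]
      calc Real.Gamma (A j + α j * k) * ((min (A j) (α j)) ^ (α j) * ((k:ℝ) + 1) ^ (α j))
          = Real.Gamma (A j + α j * k) * ((min (A j) (α j)) * ((k:ℝ) + 1)) ^ (α j) := by
            rw [Real.mul_rpow (le_min (hA j).le (hα j).le) (by positivity)]
        _ ≤ Real.Gamma (A j + α j * k) * (A j + α j * k) ^ (α j) := by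
            refine mul_le_mul_of_nonneg_left ?_ (Real.Gamma_pos_of_pos hz).le
            refine Real.rpow_le_rpow
              (by have h0 := lt_min (hA j) (hα j); positivity) ?_ (hα j).le
            have h1 : min (A j) (α j) ≤ A j := min_le_left _ _
            have h2 : min (A j) (α j) ≤ α j := min_le_right _ _
            have hk : (0:ℝ) ≤ k := Nat.cast_nonneg k
            nlinarith [lt_min (hA j) (hα j)]
        _ ≤ 2 * Real.Gamma ((A j + α j * k) + α j) :=
            gamma_frac_lower_gen (hk1 j) (hα j)
    calc (∏ j, Real.Gamma (A j + α j * k)) * Cd * ((k:ℝ) + 1) ^ (∑ j, α j)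
        = ∏ j, Real.Gamma (A j + α j * k) * ((min (A j) (α j)) ^ (α j) * ((k:ℝ) + 1) ^ (α j)) := by
          rw [Finset.prod_mul_distrib, Finset.prod_mul_distrib,
            Real.rpow_sum_of_pos (by positivity : (0:ℝ) < (k:ℝ) + 1) α Finset.univ]
          ring
      _ ≤ ∏ j, 2 * Real.Gamma (A j + α j * ((k:ℝ) + 1)) :=
          Finset.prod_le_prod (fun j _ => by
            have hz : (0:ℝ) < A j + α j * k := by have := hA j; have := hα j; positivity
            have hg := Real.Gamma_pos_of_pos hz
            have h1 : (0:ℝ) < (min (A j) (α j)) ^ (α j) :=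
              Real.rpow_pos_of_pos (lt_min (hA j) (hα j)) _
            positivity) (fun j _ => step j)
      _ = 2 ^ p * ∏ j, Real.Gamma (A j + α j * ((k:ℝ) + 1)) := by
          rw [Finset.prod_mul_distrib, Finset.prod_const, Finset.card_univ, Fintype.card_fin]
  -- the smallness of the ratio factor, eventually
  set σ := (∑ i, β i) - (∑ j, α j) - 1 with hσ
  have hσneg : σ < 0 := by rw [hσ]; linarith
  have htend : Tendsto (fun k : ℕ => KK * |R| * ((k:ℝ) + 1) ^ σ) atTop (nhds 0) := by
    have h1 : Tendsto (fun x : ℝ => x ^ σ) atTop (nhds 0) := by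
      have := tendsto_rpow_neg_atTop (y := -σ) (by linarith)
      simpa using this
    have h2 : Tendsto (fun k : ℕ => (k:ℝ) + 1) atTop atTop :=
      tendsto_atTop_add_const_right _ _ tendsto_natCast_atTop_atTop
    have h3 := (h1.comp h2).const_mul (KK * |R|)
    simpa using h3
  have hsmall : ∀ᶠ k : ℕ in atTop, KK * |R| * ((k:ℝ) + 1) ^ σ ≤ 1 / 2 := by
    have := htend.eventually (eventually_le_nhds (by norm_num : (0:ℝ) < 1/2))
    exact this
  -- ratio test
  refine summable_of_ratio_norm_eventually_le (r := 1/2) (by norm_num) ?_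
  filter_upwards [hge1, hsmall] with k hk1 hsm
  have hfact : (0:ℝ) < (Nat.factorial k : ℝ) := by positivity
  have hnorm : ∀ n : ℕ,
      ‖((∏ i, Real.Gamma (B i + β i * n)) / (∏ j, Real.Gamma (A j + α j * n)))
        * R ^ n / (Nat.factorial n : ℝ)‖
      = ((∏ i, Real.Gamma (B i + β i * n)) / (∏ j, Real.Gamma (A j + α j * n)))
        * |R| ^ n / (Nat.factorial n : ℝ) := by
    intro n
    rw [Real.norm_eq_abs, abs_div, abs_mul, abs_pow, abs_of_pos (div_pos (hP n) (hQ n)),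
      abs_of_pos (by positivity : (0:ℝ) < (Nat.factorial n : ℝ))]
  rw [hnorm, hnorm]
  set t := (k:ℝ) + 1 with ht
  have htpos : (0:ℝ) < t := by positivity
  have hcast : ((k+1:ℕ):ℝ) = t := by push_cast; ring
  -- bound on c (k+1)
  have hc1 : (∏ i, Real.Gamma (B i + β i * ((k+1:ℕ):ℝ))) / (∏ j, Real.Gamma (A j + α j * ((k+1:ℕ):ℝ)))
      ≤ ((∏ i, Real.Gamma (B i + β i * k)) / (∏ j, Real.Gamma (A j + α j * k))) * KK
        * t ^ ((∑ i, β i) - (∑ j, α j)) := by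
    rw [hcast]
    have hden : (∏ j, Real.Gamma (A j + α j * k)) * Cd * t ^ (∑ j, α j) / 2 ^ p
        ≤ ∏ j, Real.Gamma (A j + α j * t) := by
      rw [div_le_iff₀ (by positivity : (0:ℝ) < 2 ^ p)]
      calc (∏ j, Real.Gamma (A j + α j * k)) * Cd * t ^ (∑ j, α j)
          ≤ 2 ^ p * ∏ j, Real.Gamma (A j + α j * t) := hlower k hk1
        _ = (∏ j, Real.Gamma (A j + α j * t)) * 2 ^ p := by ring
    have hdenpos : (0:ℝ) < (∏ j, Real.Gamma (A j + α j * k)) * Cd * t ^ (∑ j, α j) / 2 ^ p := by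
      have := hQ k
      positivity
    calc (∏ i, Real.Gamma (B i + β i * t)) / (∏ j, Real.Gamma (A j + α j * t))
        ≤ ((∏ i, Real.Gamma (B i + β i * k)) * Cn * t ^ (∑ i, β i))
            / ((∏ j, Real.Gamma (A j + α j * k)) * Cd * t ^ (∑ j, α j) / 2 ^ p) := by
          refine div_le_div₀ (by have := hP k; positivity) (hupper k) hdenpos hden
      _ = ((∏ i, Real.Gamma (B i + β i * k)) / (∏ j, Real.Gamma (A j + α j * k))) * KK
            * t ^ ((∑ i, β i) - (∑ j, α j)) := by
          rw [Real.rpow_sub htpos, hKK]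
          have h1 := hP k; have h2 := hQ k
          have h3 : t ^ (∑ j, α j) ≠ 0 := (Real.rpow_pos_of_pos htpos _).ne'
          field_simp
          ring_nf
          simp only [add_comm, mul_comm, mul_assoc, mul_left_comm]
  -- put everything together
  have hfactsucc : ((Nat.factorial (k+1) : ℕ):ℝ) = t * (Nat.factorial k : ℝ) := by
    rw [Nat.factorial_succ]
    push_cast
    ring
  have hrpow_split : t ^ ((∑ i, β i) - (∑ j, α j)) = t ^ σ * t := by
    have h : (∑ i, β i) - (∑ j, α j) = σ + 1 := by rw [hσ]; ring
    rw [h, Real.rpow_add htpos, Real.rpow_one]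
  calc ((∏ i, Real.Gamma (B i + β i * ((k+1:ℕ):ℝ))) / (∏ j, Real.Gamma (A j + α j * ((k+1:ℕ):ℝ))))
        * |R| ^ (k+1) / ((Nat.factorial (k+1) : ℕ):ℝ)
      ≤ (((∏ i, Real.Gamma (B i + β i * k)) / (∏ j, Real.Gamma (A j + α j * k))) * KK
          * t ^ ((∑ i, β i) - (∑ j, α j))) * |R| ^ (k+1) / ((Nat.factorial (k+1) : ℕ):ℝ) := by
        gcongr
    _ = (KK * |R| * t ^ σ) * (((∏ i, Real.Gamma (B i + β i * k)) / (∏ j, Real.Gamma (A j + α j * k)))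
          * |R| ^ k / (Nat.factorial k : ℝ)) := by
        rw [hfactsucc, hrpow_split, pow_succ]
        have h2 := (hQ k).ne'
        field_simp
        ring_nf
        simp only [add_comm, mul_comm, mul_assoc, mul_left_comm]
    _ ≤ (1/2) * (((∏ i, Real.Gamma (B i + β i * k)) / (∏ j, Real.Gamma (A j + α j * k)))
          * |R| ^ k / (Nat.factorial k : ℝ)) := by
        refine mul_le_mul_of_nonneg_right hsm ?_
        have := hP k; have := hQ k
        positivity

end WrightAux

/-- The derivative of the generalized Wright function with parameters
`(Bᵢ, βᵢ), (Aⱼ, αⱼ)` is the generalized Wright function with shifted parameters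
`(Bᵢ + βᵢ, βᵢ), (Aⱼ + αⱼ, αⱼ)`. -/
theorem generalized_wright_hasDerivAt
    (m p : ℕ) (B β : Fin m → ℝ) (A α : Fin p → ℝ)
    (hB : ∀ i, 0 < B i) (hβ : ∀ i, 0 < β i)
    (hA : ∀ j, 0 < A j) (hα : ∀ j, 0 < α j)
    (hconv : (∑ i, β i) - (∑ j, α j) < 1) (x : ℝ) :
    HasDerivAt
      (fun y : ℝ => ∑' k : ℕ,
        ((∏ i, Real.Gamma (B i + β i * k)) / (∏ j, Real.Gamma (A j + α j * k)))
          * y ^ k / (Nat.factorial k : ℝ))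
      (∑' k : ℕ,
        ((∏ i, Real.Gamma (B i + β i + β i * k)) / (∏ j, Real.Gamma (A j + α j + α j * k)))
          * x ^ k / (Nat.factorial k : ℝ)) x := by

  set R := |x| + 1 with hR
  have hRpos : 0 < R := by positivity
  have hxR : |x| < R := by rw [hR]; linarith
  -- positivity facts for casts of naturals
  have hPk : ∀ k : ℕ, 0 < ∏ i, Real.Gamma (B i + β i * k) := fun k =>
    Finset.prod_pos fun i _ => Real.Gamma_pos_of_pos (by have := hB i; have := hβ i; positivity)
  have hQk : ∀ k : ℕ, 0 < ∏ j, Real.Gamma (A j + α j * k) := fun k =>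
    Finset.prod_pos fun j _ => Real.Gamma_pos_of_pos (by have := hA j; have := hα j; positivity)
  -- the shifted series is summable (for the bound u)
  have hv : Summable (fun k : ℕ =>
      ((∏ i, Real.Gamma (B i + β i + β i * k)) / (∏ j, Real.Gamma (A j + α j + α j * k)))
        * R ^ k / (Nat.factorial k : ℝ)) := by
    have := wright_summable m p (fun i => B i + β i) β (fun j => A j + α j) α
      (fun i => by have := hB i; have := hβ i; positivity) hβ
      (fun j => by have := hA j; have := hα j; positivity) hα hconv R
    simpa using this
  -- cast identities
  have hPc : ∀ n : ℕ, (∏ i, Real.Gamma (B i + β i * ((n+1:ℕ):ℝ)))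
      = ∏ i, Real.Gamma (B i + β i + β i * n) := fun n =>
    Finset.prod_congr rfl fun i _ => by congr 1; push_cast; ring
  have hQc : ∀ n : ℕ, (∏ j, Real.Gamma (A j + α j * ((n+1:ℕ):ℝ)))
      = ∏ j, Real.Gamma (A j + α j + α j * n) := fun n =>
    Finset.prod_congr rfl fun j _ => by congr 1; push_cast; ring
  have hfc : ∀ n : ℕ, ((Nat.factorial (n+1) : ℕ):ℝ) = ((n:ℝ) + 1) * (Nat.factorial n : ℝ) := by
    intro n; rw [Nat.factorial_succ]; push_cast; ring
  have key : ∀ (c w F : ℝ) (n : ℕ), (0:ℝ) < F →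
      c * (((n:ℝ) + 1) * w ^ n) / (((n:ℝ) + 1) * F) = c * w ^ n / F := by
    intro c w F n hF
    have ht : ((n:ℝ) + 1) ≠ 0 := by positivity
    have h : c * (((n:ℝ) + 1) * w ^ n) = ((n:ℝ) + 1) * (c * w ^ n) := by ring
    rw [h, mul_div_mul_left _ _ ht]
  -- the bound sequence u and its summability
  have hu : Summable (fun n : ℕ =>
      ((∏ i, Real.Gamma (B i + β i * n)) / (∏ j, Real.Gamma (A j + α j * n)))
        * ((n : ℝ) * R ^ (n - 1)) / (Nat.factorial n : ℝ)) := by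
    rw [← summable_nat_add_iff 1]
    have heq : (fun n : ℕ =>
        ((∏ i, Real.Gamma (B i + β i * ((n+1:ℕ):ℝ))) / (∏ j, Real.Gamma (A j + α j * ((n+1:ℕ):ℝ))))
          * (((n+1:ℕ) : ℝ) * R ^ ((n+1) - 1)) / (Nat.factorial (n+1) : ℝ))
        = (fun n : ℕ =>
        ((∏ i, Real.Gamma (B i + β i + β i * n)) / (∏ j, Real.Gamma (A j + α j + α j * n)))
          * R ^ n / (Nat.factorial n : ℝ)) := by
      funext n
      rw [hPc, hQc, hfc]
      have h1 : (0:ℝ) < (n:ℝ) + 1 := by positivity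
      have h2 : (0:ℝ) < (Nat.factorial n : ℝ) := by positivity
      have h3 : ((n+1:ℕ):ℝ) = (n:ℝ) + 1 := by push_cast; ring
      rw [h3]
      simp only [Nat.add_sub_cancel]
      exact key _ _ _ n h2
    exact heq ▸ hv
  -- derivative of each term
  have hg : ∀ (n : ℕ) (y : ℝ), y ∈ Metric.ball (0:ℝ) R →
      HasDerivAt (fun y : ℝ =>
        ((∏ i, Real.Gamma (B i + β i * n)) / (∏ j, Real.Gamma (A j + α j * n)))
          * y ^ n / (Nat.factorial n : ℝ))
        (((∏ i, Real.Gamma (B i + β i * n)) / (∏ j, Real.Gamma (A j + α j * n)))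
          * ((n : ℝ) * y ^ (n - 1)) / (Nat.factorial n : ℝ)) y := by
    intro n y _
    exact ((hasDerivAt_pow n y).const_mul _).div_const _
  -- norm bound on the derivatives
  have hg' : ∀ (n : ℕ) (y : ℝ), y ∈ Metric.ball (0:ℝ) R →
      ‖((∏ i, Real.Gamma (B i + β i * n)) / (∏ j, Real.Gamma (A j + α j * n)))
          * ((n : ℝ) * y ^ (n - 1)) / (Nat.factorial n : ℝ)‖
        ≤ ((∏ i, Real.Gamma (B i + β i * n)) / (∏ j, Real.Gamma (A j + α j * n)))
          * ((n : ℝ) * R ^ (n - 1)) / (Nat.factorial n : ℝ) := by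
    intro n y hy
    rw [Metric.mem_ball, dist_zero_right, Real.norm_eq_abs] at hy
    rw [Real.norm_eq_abs, abs_div, abs_mul, abs_mul, abs_pow,
      abs_of_pos (div_pos (hPk n) (hQk n)), Nat.abs_cast,
      abs_of_pos (by positivity : (0:ℝ) < (Nat.factorial n : ℝ))]
    gcongr <;>
      first
        | exact (div_pos (hPk n) (hQk n)).le
        | exact abs_nonneg y
        | exact hy.le
        | positivity
  -- summability at x
  have hg0 : Summable (fun n : ℕ =>
      ((∏ i, Real.Gamma (B i + β i * n)) / (∏ j, Real.Gamma (A j + α j * n)))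
        * x ^ n / (Nat.factorial n : ℝ)) :=
    wright_summable m p B β A α hB hβ hA hα hconv x
  have hx : x ∈ Metric.ball (0:ℝ) R := by
    rw [Metric.mem_ball, dist_zero_right, Real.norm_eq_abs]; exact hxR
  have main := hasDerivAt_tsum_of_isPreconnected hu Metric.isOpen_ball
    (convex_ball (0:ℝ) R).isPreconnected hg hg' hx hg0 hx
  -- identify the derivative value
  have hsum' : Summable (fun n : ℕ =>
      ((∏ i, Real.Gamma (B i + β i * n)) / (∏ j, Real.Gamma (A j + α j * n)))
        * ((n : ℝ) * x ^ (n - 1)) / (Nat.factorial n : ℝ)) :=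
    Summable.of_norm_bounded hu (fun n => hg' n x hx)
  have heq : (∑' n : ℕ,
      ((∏ i, Real.Gamma (B i + β i * n)) / (∏ j, Real.Gamma (A j + α j * n)))
        * ((n : ℝ) * x ^ (n - 1)) / (Nat.factorial n : ℝ))
      = ∑' k : ℕ,
      ((∏ i, Real.Gamma (B i + β i + β i * k)) / (∏ j, Real.Gamma (A j + α j + α j * k)))
        * x ^ k / (Nat.factorial k : ℝ) := by
    rw [Summable.tsum_eq_zero_add hsum']
    have h0 : ((∏ i, Real.Gamma (B i + β i * (0:ℕ))) / (∏ j, Real.Gamma (A j + α j * (0:ℕ))))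
        * (((0:ℕ) : ℝ) * x ^ ((0:ℕ) - 1)) / (Nat.factorial 0 : ℝ) = 0 := by
      simp
    rw [h0, zero_add]
    refine tsum_congr fun n => ?_
    rw [hPc, hQc, hfc]
    have h2 : (0:ℝ) < (Nat.factorial n : ℝ) := by positivity
    have h3 : ((n+1:ℕ):ℝ) = (n:ℝ) + 1 := by push_cast; ring
    rw [h3]
    simp only [Nat.add_sub_cancel]
    exact key _ _ _ n h2
  rw [← heq]
  exact main
end

section
/- Let ν be a Borel probability measure on (0,∞) whose moments are given by the Gamma-ratio formula ∫_0^∞ τ^k dν(τ) = (1/K) · ∏_{i=1}^m Γ(b_i + β_i(k+1)) / ∏_{j=1}^p Γ(a_j + α_j(k+1)) for all k ∈ ℕ, where β_i > 0, b_i + β_i > 0, α_j > 0, a_j + α_j > 0, K = ∏_{i=1}^m Γ(b_i + β_i) / ∏_{j=1}^p Γ(a_j + α_j), and a* := ∑_{i=1}^m β_i − ∑_{j=1}^p α_j ∈ (0,1). Then for every s ≥ 0, ∫_0^∞ e^{−sτ} dν(τ) = (1/K) · ∑_{k=0}^∞ (∏_{i=1}^m Γ(b_i + β_i + β_i k) /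 ∏_{j=1}^p Γ(a_j + α_j + α_j k)) (−s)^k / k!; i.e., the Laplace transform of ν equals (1/K) times the generalized Wright function with parameters (b_i + β_i, β_i)_{1,m}, (a_j + α_j, α_j)_{1,p} evaluated at −s. -/
open MeasureTheory

set_option maxHeartbeats 1000000

namespace LaplaceWrightAux

open Real Filter Topology

lemma wendel_upper {x t : ℝ} (hx : 0 < x) (ht0 : 0 ≤ t) (ht1 : t ≤ 1) :
    Gamma (x + t) ≤ Gamma x * x ^ t := by
  have h := convexOn_log_Gamma.2 (Set.mem_Ioi.2 hx)
    (Set.mem_Ioi.2 (by linarith : (0:ℝ) < x + 1))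
    (by linarith : (0:ℝ) ≤ 1 - t) ht0 (by ring)
  simp only [smul_eq_mul, Function.comp_apply] at h
  have hxt : (1 - t) * x + t * (x + 1) = x + t := by ring
  rw [hxt, Gamma_add_one hx.ne', log_mul hx.ne' (Gamma_pos_of_pos hx).ne'] at h
  have h2 : log (Gamma (x + t)) ≤ log (Gamma x) + t * log x := by nlinarith [h]
  have hgpos : 0 < Gamma (x + t) := Gamma_pos_of_pos (by linarith)
  calc Gamma (x + t) = exp (log (Gamma (x + t))) := (exp_log hgpos).symm
    _ ≤ exp (log (Gamma x) + t * log x) := exp_le_exp.2 h2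
    _ = Gamma x * x ^ t := by
        rw [exp_add, exp_log (Gamma_pos_of_pos hx), rpow_def_of_pos hx, mul_comm (log x) t]

lemma wendel_lower {x t : ℝ} (hx : 0 < x) (ht0 : 0 ≤ t) (ht1 : t ≤ 1) :
    Gamma x * x ≤ Gamma (x + t) * (x + t) ^ (1 - t) := by
  have hxt : 0 < x + t := by linarith
  have h := convexOn_log_Gamma.2 (Set.mem_Ioi.2 hxt)
    (Set.mem_Ioi.2 (by linarith : (0:ℝ) < x + t + 1))
    ht0 (by linarith : (0:ℝ) ≤ 1 - t) (by ring)
  simp only [smul_eq_mul, Function.comp_apply] at h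
  have he : t * (x + t) + (1 - t) * (x + t + 1) = x + 1 := by ring
  rw [he, Gamma_add_one hx.ne', Gamma_add_one hxt.ne',
    log_mul hx.ne' (Gamma_pos_of_pos hx).ne',
    log_mul hxt.ne' (Gamma_pos_of_pos hxt).ne'] at h
  have h2 : log x + log (Gamma x) ≤ log (Gamma (x + t)) + (1 - t) * log (x + t) := by
    nlinarith [h]
  have hgx : 0 < Gamma x := Gamma_pos_of_pos hx
  have hgxt : 0 < Gamma (x + t) := Gamma_pos_of_pos hxt
  calc Gamma x * x = exp (log x + log (Gamma x)) := by
        rw [exp_add, exp_log hx, exp_log hgx]; ring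
    _ ≤ exp (log (Gamma (x + t)) + (1 - t) * log (x + t)) := exp_le_exp.2 h2
    _ = Gamma (x + t) * (x + t) ^ (1 - t) := by
        rw [exp_add, exp_log hgxt, rpow_def_of_pos hxt, mul_comm (log (x+t)) (1-t)]

lemma gamma_ratio_upper_aux (n : ℕ) : ∀ x c : ℝ, 0 < x → 0 ≤ c → c ≤ n →
    Gamma (x + c) ≤ Gamma x * (x + c) ^ c := by
  induction n with
  | zero =>
    intro x c hx hc0 hc1
    have : c = 0 := le_antisymm (by exact_mod_cast hc1) hc0
    simp [this]
  | succ n ih =>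
    intro x c hx hc0 hcn
    rcases le_or_gt c 1 with hc1 | hc1
    · calc Gamma (x + c) ≤ Gamma x * x ^ c := wendel_upper hx hc0 hc1
        _ ≤ Gamma x * (x + c) ^ c :=
          mul_le_mul_of_nonneg_left (rpow_le_rpow hx.le (by linarith) hc0)
            (Gamma_pos_of_pos hx).le
    · have hc0' : (0:ℝ) ≤ c - 1 := by linarith
      have hcn' : c - 1 ≤ n := by push_cast at hcn ⊢; linarith
      have hxc1 : 0 < x + (c - 1) := by linarith
      have key : Gamma (x + c) = (x + (c - 1)) * Gamma (x + (c - 1)) := by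
        rw [← Gamma_add_one hxc1.ne']; ring_nf
      have ihx := ih x (c - 1) hx hc0' hcn'
      calc Gamma (x + c) = (x + (c - 1)) * Gamma (x + (c - 1)) := key
        _ ≤ (x + (c - 1)) * (Gamma x * (x + (c - 1)) ^ (c - 1)) :=
          mul_le_mul_of_nonneg_left ihx hxc1.le
        _ = Gamma x * ((x + (c - 1)) * (x + (c - 1)) ^ (c - 1)) := by ring
        _ = Gamma x * (x + (c - 1)) ^ c := by
          rw [← rpow_one_add' hxc1.le (by intro h; linarith [h] : 1 + (c-1) ≠ 0)]
          ring_nf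
        _ ≤ Gamma x * (x + c) ^ c :=
          mul_le_mul_of_nonneg_left
            (rpow_le_rpow hxc1.le (by linarith) hc0) (Gamma_pos_of_pos hx).le

lemma gamma_ratio_upper {x c : ℝ} (hx : 0 < x) (hc : 0 ≤ c) :
    Gamma (x + c) ≤ Gamma x * (x + c) ^ c :=
  gamma_ratio_upper_aux ⌈c⌉₊ x c hx hc (Nat.le_ceil c)

lemma gamma_ratio_lower_aux (n : ℕ) : ∀ x c : ℝ, 0 < x → 0 ≤ c → c ≤ n →
    Gamma x * x ^ (c + 1) / (x + c) ≤ Gamma (x + c) := by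
  induction n with
  | zero =>
    intro x c hx hc0 hc1
    have : c = 0 := le_antisymm (by exact_mod_cast hc1) hc0
    simp [this, rpow_one, mul_div_assoc, div_self hx.ne']
  | succ n ih =>
    intro x c hx hc0 hcn
    have hxc : 0 < x + c := by linarith
    have hgx : 0 < Gamma x := Gamma_pos_of_pos hx
    rcases le_or_gt c 1 with hc1 | hc1
    · -- from wendel_lower : Gamma x * x ≤ Gamma (x+c) * (x+c)^(1-c)
      have h := wendel_lower hx hc0 hc1
      -- target : Gamma x * x^(c+1) / (x+c) ≤ Gamma (x+c)
      rw [div_le_iff₀ hxc]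
      -- Gamma x * x^(c+1) ≤ Gamma (x+c) * (x+c)
      -- we know Gamma x * x ≤ Gamma (x+c) * (x+c)^(1-c)
      -- multiply both sides by x^c : Gamma x * x^(c+1) ≤ Gamma(x+c) * (x+c)^(1-c) * x^c
      --   ≤ Gamma(x+c) * (x+c)^(1-c) * (x+c)^c = Gamma(x+c)*(x+c)
      have h1 : Gamma x * x ^ (c + 1) ≤ Gamma (x + c) * (x + c) ^ (1 - c) * x ^ c := by
        have := mul_le_mul_of_nonneg_right h (rpow_nonneg hx.le c)
        calc Gamma x * x ^ (c + 1) = Gamma x * x * x ^ c := by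
              rw [rpow_add hx, rpow_one]; ring
          _ ≤ Gamma (x + c) * (x + c) ^ (1 - c) * x ^ c := this
      have h2 : Gamma (x + c) * (x + c) ^ (1 - c) * x ^ c
          ≤ Gamma (x + c) * (x + c) ^ (1 - c) * (x + c) ^ c := by
        apply mul_le_mul_of_nonneg_left (rpow_le_rpow hx.le (by linarith) hc0)
        positivity
      have h3 : Gamma (x + c) * (x + c) ^ (1 - c) * (x + c) ^ c = Gamma (x + c) * (x + c) := by
        rw [mul_assoc, ← rpow_add hxc]; norm_num
      linarith
    · have hc0' : (0:ℝ) ≤ c - 1 := by linarith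
      have hcn' : c - 1 ≤ n := by push_cast at hcn ⊢; linarith
      have hxc1 : 0 < x + (c - 1) := by linarith
      have key : Gamma (x + c) = (x + (c - 1)) * Gamma (x + (c - 1)) := by
        rw [← Gamma_add_one hxc1.ne']; ring_nf
      have ihx := ih x (c - 1) hx hc0' hcn'
      -- Gamma(x+c) ≥ (x+(c-1)) * Gamma x * x^c / (x+(c-1)) = Gamma x * x^c
      have h4 : Gamma x * x ^ c ≤ Gamma (x + c) := by
        rw [key]
        have := mul_le_mul_of_nonneg_left ihx hxc1.le
        calc Gamma x * x ^ c = (x + (c-1)) * (Gamma x * x ^ ((c-1) + 1) / (x + (c-1))) := by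
              rw [mul_div_assoc', mul_comm (x + (c-1)), mul_div_assoc, div_self hxc1.ne']
              ring_nf
          _ ≤ (x + (c-1)) * Gamma (x + (c-1)) := this
      -- and Gamma x * x^(c+1)/(x+c) ≤ Gamma x * x^c since x ≤ x + c
      have h5 : Gamma x * x ^ (c + 1) / (x + c) ≤ Gamma x * x ^ c := by
        rw [div_le_iff₀ hxc, rpow_add hx, rpow_one]
        have : Gamma x * x ^ c * x ≤ Gamma x * x ^ c * (x + c) := by
          apply mul_le_mul_of_nonneg_left (by linarith) (by positivity)
        linarith [this]
      linarith

lemma gamma_ratio_lower {x c : ℝ} (hx : 0 < x) (hc : 0 ≤ c) :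
    Gamma x * x ^ (c + 1) / (x + c) ≤ Gamma (x + c) :=
  gamma_ratio_lower_aux ⌈c⌉₊ x c hx hc (Nat.le_ceil c)

lemma summable_wright (m p : ℕ) (b β : Fin m → ℝ) (a α : Fin p → ℝ)
    (hβ : ∀ i, 0 < β i) (hbβ : ∀ i, 0 < b i + β i)
    (hα : ∀ j, 0 < α j) (haα : ∀ j, 0 < a j + α j)
    (hastar : (∑ i, β i) - (∑ j, α j) ∈ Set.Ioo (0:ℝ) 1)
    (s : ℝ) (hs : 0 ≤ s) :
    Summable (fun k : ℕ =>
      (∏ i, Gamma (b i + β i + β i * k)) / (∏ j, Gamma (a j + α j + α j * k))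
        * s ^ k / (Nat.factorial k : ℝ)) := by
  obtain ⟨hσ0, hσ1⟩ := hastar
  set σ : ℝ := (∑ i, β i) - (∑ j, α j) with hσ
  set P : ℕ → ℝ := fun k => ∏ i, Gamma (b i + β i + β i * k) with hP
  set Q : ℕ → ℝ := fun k => ∏ j, Gamma (a j + α j + α j * k) with hQ
  set u : ℕ → ℝ := fun k => P k / Q k * s ^ k / (Nat.factorial k : ℝ) with hu
  have hxpos : ∀ (k : ℕ) i, 0 < b i + β i + β i * k := fun k i => by
    have h1 := hbβ i
    have h2 : (0:ℝ) ≤ β i * k := mul_nonneg (hβ i).le (Nat.cast_nonneg k)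
    linarith
  have hypos : ∀ (k : ℕ) j, 0 < a j + α j + α j * k := fun k j => by
    have h1 := haα j
    have h2 : (0:ℝ) ≤ α j * k := mul_nonneg (hα j).le (Nat.cast_nonneg k)
    linarith
  have hPpos : ∀ k, 0 < P k := fun k =>
    Finset.prod_pos fun i _ => Gamma_pos_of_pos (hxpos k i)
  have hQpos : ∀ k, 0 < Q k := fun k =>
    Finset.prod_pos fun j _ => Gamma_pos_of_pos (hypos k j)
  have hu0 : ∀ k, 0 ≤ u k := fun k => by
    apply div_nonneg (mul_nonneg (div_nonneg (hPpos k).le (hQpos k).le)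
      (pow_nonneg hs k)) (Nat.cast_nonneg _)
  set A : ℕ → ℝ := fun k => ∏ i, (b i + β i + β i * k + β i) ^ (β i) with hA
  set B : ℕ → ℝ := fun k =>
    ∏ j, (a j + α j + α j * k) ^ (α j + 1) / (a j + α j + α j * k + α j) with hB
  have hApos : ∀ k, 0 < A k := fun k => Finset.prod_pos fun i _ =>
    rpow_pos_of_pos (by have := hxpos k i; have := hβ i; linarith) _
  have hBpos : ∀ k, 0 < B k := fun k => Finset.prod_pos fun j _ =>
    div_pos (rpow_pos_of_pos (hypos k j) _) (by have := hypos k j; have := hα j; linarith)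
  set D : ℕ → ℝ := fun k => s / (k + 1) * (A k / B k) with hD
  have hD0 : ∀ k, 0 ≤ D k := fun k => by
    apply mul_nonneg (div_nonneg hs (by positivity)) (div_nonneg (hApos k).le (hBpos k).le)
  -- step inequality
  have hstep : ∀ k, u (k + 1) ≤ D k * u k := by
    intro k
    have hPn : P (k + 1) ≤ P k * A k := by
      have hrw : P (k + 1) = ∏ i, Gamma ((b i + β i + β i * k) + β i) :=
        Finset.prod_congr rfl fun i _ => by push_cast; ring_nf
      rw [hrw, hP, hA, ← Finset.prod_mul_distrib]
      exact Finset.prod_le_prod (fun i _ => (Gamma_pos_of_pos (by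
        have := hxpos k i; have := hβ i; linarith)).le)
        (fun i _ => gamma_ratio_upper (hxpos k i) (hβ i).le)
    have hQn : Q k * B k ≤ Q (k + 1) := by
      have hrw : Q (k + 1) = ∏ j, Gamma ((a j + α j + α j * k) + α j) :=
        Finset.prod_congr rfl fun j _ => by push_cast; ring_nf
      rw [hrw, hQ, hB, ← Finset.prod_mul_distrib]
      refine Finset.prod_le_prod (fun j _ => ?_) (fun j _ => ?_)
      · have := hypos k j; have := hα j; positivity
      · have h := gamma_ratio_lower (hypos k j) (hα j).le
        rw [mul_div_assoc] at h
        exact h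
    have h1 : P (k + 1) / Q (k + 1) ≤ (P k * A k) / (Q k * B k) :=
      div_le_div₀ (mul_nonneg (hPpos k).le (hApos k).le) hPn (mul_pos (hQpos k) (hBpos k)) hQn
    have h2 := mul_le_mul_of_nonneg_right h1
      (by positivity : (0:ℝ) ≤ s ^ (k + 1) / (Nat.factorial (k+1) : ℝ))
    calc u (k + 1) = P (k + 1) / Q (k + 1) * (s ^ (k + 1) / (Nat.factorial (k+1) : ℝ)) := by
          rw [hu]; ring
      _ ≤ (P k * A k) / (Q k * B k) * (s ^ (k + 1) / (Nat.factorial (k+1) : ℝ)) := h2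
      _ = D k * u k := by
          rw [hD, hu]
          have hk1 : (Nat.factorial (k+1) : ℝ) = (k + 1) * (Nat.factorial k : ℝ) := by
            rw [Nat.factorial_succ]; push_cast; ring
          rw [hk1]
          field_simp
          ring
  -- tendsto of D to 0
  have hDlim : Tendsto D atTop (𝓝 0) := by
    set C : ℝ := s * (∏ i, (|b i| + 3 * β i) ^ (β i)) /
      (∏ j, ((α j / 2) ^ (α j + 1) / (|a j| + 3 * α j))) with hC
    have hCnum : (0:ℝ) < ∏ i, (|b i| + 3 * β i) ^ (β i) :=
      Finset.prod_pos fun i _ => rpow_pos_of_pos (by have := hβ i; have := abs_nonneg (b i); linarith) _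
    have hCden : (0:ℝ) < ∏ j, ((α j / 2) ^ (α j + 1) / (|a j| + 3 * α j)) :=
      Finset.prod_pos fun j _ => div_pos (rpow_pos_of_pos (by have := hα j; linarith) _)
        (by have := hα j; have := abs_nonneg (a j); linarith)
    have hbound : ∀ᶠ k in atTop, D k ≤ C * ((k:ℝ) + 1) ^ (σ - 1) := by
      filter_upwards [eventually_ge_atTop 1] with k hk
      set n : ℝ := (k : ℝ) + 1 with hn
      have hn0 : (0:ℝ) < n := by positivity
      have hn2 : (2:ℝ) ≤ n := by
        have : (1:ℝ) ≤ (k:ℝ) := by exact_mod_cast hk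
        simp only [hn]; linarith
      have hAle : A k ≤ (∏ i, (|b i| + 3 * β i) ^ (β i)) * n ^ (∑ i, β i) := by
        rw [rpow_sum_of_pos hn0, ← Finset.prod_mul_distrib, hA]
        refine Finset.prod_le_prod (fun i _ =>
          rpow_nonneg (by have := hxpos k i; have := hβ i; linarith) _) (fun i _ => ?_)
        rw [← mul_rpow (by have := hβ i; have := abs_nonneg (b i); linarith : (0:ℝ) ≤ |b i| + 3 * β i) hn0.le]
        apply rpow_le_rpow (by have := hxpos k i; have := hβ i; linarith) ?_ (hβ i).le
        have h1 : b i ≤ |b i| * n := le_trans (le_abs_self _)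
          (le_mul_of_one_le_right (abs_nonneg _) (by linarith))
        have h2 : β i * (k:ℝ) ≤ β i * n := by
          apply mul_le_mul_of_nonneg_left (by rw [hn]; linarith) (hβ i).le
        nlinarith [hβ i]
      have hBge : (∏ j, ((α j / 2) ^ (α j + 1) / (|a j| + 3 * α j))) * n ^ (∑ j, α j) ≤ B k := by
        rw [rpow_sum_of_pos hn0, ← Finset.prod_mul_distrib, hB]
        refine Finset.prod_le_prod (fun j _ => mul_nonneg
          (div_nonneg (rpow_nonneg (by have := hα j; linarith) _)
            (by have := hα j; have := abs_nonneg (a j); linarith))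
          (rpow_nonneg hn0.le _)) (fun j _ => ?_)
        have hαj := hα j
        have haj := abs_nonneg (a j)
        have hyj := hypos k j
        have hden : a j + α j + α j * k + α j ≤ (|a j| + 3 * α j) * n := by
          have h1 : a j ≤ |a j| * n := le_trans (le_abs_self _)
            (le_mul_of_one_le_right (abs_nonneg _) (by linarith))
          have h2 : α j * (k:ℝ) ≤ α j * n := by
            apply mul_le_mul_of_nonneg_left (by rw [hn]; linarith) hαj.le
          nlinarith
        have hnum : (α j / 2) * n ≤ a j + α j + α j * k := by
          have h1 : (α j / 2) * n = α j / 2 * (k:ℝ) + α j / 2 := by rw [hn]; ring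
          have h2 : (0:ℝ) ≤ α j / 2 * (k:ℝ) := by positivity
          have h3 := haα j
          nlinarith [(by exact_mod_cast hk : (1:ℝ) ≤ (k:ℝ))]
        calc (α j / 2) ^ (α j + 1) / (|a j| + 3 * α j) * n ^ (α j)
            = ((α j / 2) * n) ^ (α j + 1) / ((|a j| + 3 * α j) * n) := by
              rw [mul_rpow (by positivity) hn0.le, rpow_add hn0, rpow_one]
              field_simp
          _ ≤ (a j + α j + α j * k) ^ (α j + 1) / (a j + α j + α j * k + α j) := by
              apply div_le_div₀ (by positivity)
                (rpow_le_rpow (by positivity) hnum (by linarith)) (by linarith) hden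
      have hfrac : A k / B k ≤ ((∏ i, (|b i| + 3 * β i) ^ (β i)) * n ^ (∑ i, β i)) /
          ((∏ j, ((α j / 2) ^ (α j + 1) / (|a j| + 3 * α j))) * n ^ (∑ j, α j)) :=
        div_le_div₀ (by positivity) hAle (by positivity) hBge
      calc D k = s / n * (A k / B k) := by rw [hD]
        _ ≤ s / n * (((∏ i, (|b i| + 3 * β i) ^ (β i)) * n ^ (∑ i, β i)) /
            ((∏ j, ((α j / 2) ^ (α j + 1) / (|a j| + 3 * α j))) * n ^ (∑ j, α j))) :=
          mul_le_mul_of_nonneg_left hfrac (by positivity)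
        _ = C * n ^ (σ - 1) := by
            rw [hC, hσ, show (∑ i, β i) - (∑ j, α j) - 1 = (∑ i, β i) - ((∑ j, α j) + 1) by ring,
              rpow_sub hn0, rpow_add hn0, rpow_one]
            have e1 : n ^ (∑ i, β i) ≠ 0 := (rpow_pos_of_pos hn0 _).ne'
            have e2 : n ^ (∑ j, α j) ≠ 0 := (rpow_pos_of_pos hn0 _).ne'
            field_simp
    have hClim : Tendsto (fun k : ℕ => C * ((k:ℝ) + 1) ^ (σ - 1)) atTop (𝓝 0) := by
      have h1 : Tendsto (fun k : ℕ => (k:ℝ) + 1) atTop atTop :=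
        tendsto_atTop_add_const_right _ 1 tendsto_natCast_atTop_atTop
      have h2 : Tendsto (fun x : ℝ => x ^ (σ - 1)) atTop (𝓝 0) := by
        have := tendsto_rpow_neg_atTop (y := 1 - σ) (by linarith : (0:ℝ) < 1 - σ)
        simpa [neg_sub] using this
      have h3 := (h2.comp h1).const_mul C
      simpa using h3
    exact squeeze_zero' (Eventually.of_forall hD0) hbound hClim
  -- ratio test
  have hev : ∀ᶠ k in atTop, D k < 1 / 2 := hDlim.eventually_lt_const (by norm_num)
  refine summable_of_ratio_norm_eventually_le (r := 1/2) (by norm_num) ?_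
  filter_upwards [hev] with k hk
  rw [Real.norm_of_nonneg (hu0 _), Real.norm_of_nonneg (hu0 _)]
  calc u (k + 1) ≤ D k * u k := hstep k
    _ ≤ 1 / 2 * u k := mul_le_mul_of_nonneg_right hk.le (hu0 k)

end LaplaceWrightAux

open LaplaceWrightAux Real Filter Topology in
/-- If a Borel probability measure on `(0,∞)` has Gamma-ratio moments, then its Laplace
transform is `(1/K)` times the generalized Wright function with shifted parameters
evaluated at `-s`. -/
theorem laplace_transform_eq_generalized_wright
    (m p : ℕ) (b β : Fin m → ℝ) (a α : Fin p → ℝ)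
    (hβ : ∀ i, 0 < β i) (hbβ : ∀ i, 0 < b i + β i)
    (hα : ∀ j, 0 < α j) (haα : ∀ j, 0 < a j + α j)
    (hastar : (∑ i, β i) - (∑ j, α j) ∈ Set.Ioo (0 : ℝ) 1)
    (K : ℝ) (hK : K = (∏ i, Real.Gamma (b i + β i)) / (∏ j, Real.Gamma (a j + α j)))
    (ν : Measure ℝ) [IsProbabilityMeasure ν] (hsupp : ν (Set.Iic 0) = 0)
    (hint : ∀ k : ℕ, Integrable (fun τ : ℝ => τ ^ k) ν)
    (hmom : ∀ k : ℕ, ∫ τ, τ ^ k ∂ν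
      = (1 / K) * (∏ i, Real.Gamma (b i + β i * (k + 1)))
          / (∏ j, Real.Gamma (a j + α j * (k + 1))))
    (s : ℝ) (hs : 0 ≤ s) :
    ∫ τ, Real.exp (-s * τ) ∂ν
      = (1 / K) * ∑' k : ℕ,
          ((∏ i, Real.Gamma (b i + β i + β i * k)) / (∏ j, Real.Gamma (a j + α j + α j * k)))
            * (-s) ^ k / (Nat.factorial k : ℝ) := by
  have hae : ∀ᵐ τ ∂ν, 0 < τ := by
    rw [ae_iff]
    have : {τ : ℝ | ¬ 0 < τ} = Set.Iic 0 := by ext τ; simp [not_lt]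
    rw [this]; exact hsupp
  have hKpos : 0 < K := by
    rw [hK]
    exact div_pos (Finset.prod_pos fun i _ => Gamma_pos_of_pos (hbβ i))
      (Finset.prod_pos fun j _ => Gamma_pos_of_pos (haα j))
  set R : ℕ → ℝ := fun k =>
    (∏ i, Gamma (b i + β i + β i * k)) / (∏ j, Gamma (a j + α j + α j * k)) with hR
  have hRpos : ∀ k, 0 < R k := fun k => by
    apply div_pos <;> apply Finset.prod_pos <;> intro x _ <;> apply Gamma_pos_of_pos
    · have := hbβ x
      have : (0:ℝ) ≤ β x * k := mul_nonneg (hβ x).le (Nat.cast_nonneg k)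
      linarith [hbβ x]
    · have : (0:ℝ) ≤ α x * k := mul_nonneg (hα x).le (Nat.cast_nonneg k)
      linarith [haα x]
  have hmom' : ∀ k : ℕ, ∫ τ, τ ^ k ∂ν = (1 / K) * R k := by
    intro k
    rw [hmom k, mul_div_assoc, hR]
    congr 2
    · exact Finset.prod_congr rfl fun i _ => by congr 1; push_cast; ring
    · exact Finset.prod_congr rfl fun j _ => by congr 1; push_cast; ring
  set f : ℕ → ℝ → ℝ := fun k τ => (-s * τ) ^ k / (Nat.factorial k : ℝ) with hf
  have hfm : ∀ k, AEStronglyMeasurable (f k) ν := fun k =>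
    (((continuous_const.mul continuous_id).pow k).div_const _).aestronglyMeasurable
  have hI : ∀ k, Integrable (f k) ν := by
    intro k
    have : f k = fun τ => ((-s) ^ k / (Nat.factorial k : ℝ)) * τ ^ k := by
      funext τ; simp only [hf]; rw [mul_pow]; ring
    rw [this]
    exact (hint k).const_mul _
  have hnorm : ∀ k, ∫ τ, ‖f k τ‖ ∂ν = s ^ k / (Nat.factorial k : ℝ) * ((1 / K) * R k) := by
    intro k
    have heq : (fun τ => ‖f k τ‖) =ᵐ[ν] fun τ => s ^ k / (Nat.factorial k : ℝ) * τ ^ k := by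
      filter_upwards [hae] with τ hτ
      rw [hf]
      simp only [Real.norm_eq_abs, abs_div, abs_pow, abs_neg, abs_mul, Nat.abs_cast,
        abs_of_nonneg hs, abs_of_pos hτ, mul_pow]
      ring
    rw [integral_congr_ae heq, integral_const_mul, hmom' k]
  have hsummable : Summable (fun k : ℕ => s ^ k / (Nat.factorial k : ℝ) * ((1 / K) * R k)) := by
    have h0 := (summable_wright m p b β a α hβ hbβ hα haα hastar s hs).mul_left (1 / K)
    apply h0.congr
    intro k
    rw [hR]
    ring
  have hT0 : ∀ k : ℕ, 0 ≤ s ^ k / (Nat.factorial k : ℝ) * ((1 / K) * R k) := fun k => by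
    have := hRpos k
    positivity
  have hf' : (∑' k : ℕ, ∫⁻ τ, ‖f k τ‖₊ ∂ν) ≠ ⊤ := by
    have heq : ∀ k : ℕ, ∫⁻ τ, ‖f k τ‖₊ ∂ν
        = ENNReal.ofReal (s ^ k / (Nat.factorial k : ℝ) * ((1 / K) * R k)) := by
      intro k
      simp_rw [← enorm_eq_nnnorm]
      rw [← MeasureTheory.ofReal_integral_norm_eq_lintegral_enorm (hI k), hnorm k]
    simp_rw [heq]
    rw [← ENNReal.ofReal_tsum_of_nonneg hT0 hsummable]
    exact ENNReal.ofReal_ne_top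
  have hswap : ∫ τ, (∑' k, f k τ) ∂ν = ∑' k, ∫ τ, f k τ ∂ν := integral_tsum hfm hf'
  have hexp : ∀ τ : ℝ, Real.exp (-s * τ) = ∑' k, f k τ := by
    intro τ
    rw [Real.exp_eq_exp_ℝ, NormedSpace.exp_eq_tsum_div]
  have hintk : ∀ k, ∫ τ, f k τ ∂ν = (1 / K) * (R k * (-s) ^ k / (Nat.factorial k : ℝ)) := by
    intro k
    have : (fun τ => f k τ) = fun τ => ((-s) ^ k / (Nat.factorial k : ℝ)) * τ ^ k := by
      funext τ; simp only [hf]; rw [mul_pow]; ring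
    rw [this, integral_const_mul, hmom' k]
    ring
  calc ∫ τ, Real.exp (-s * τ) ∂ν = ∫ τ, (∑' k, f k τ) ∂ν := by simp_rw [hexp]
    _ = ∑' k, ∫ τ, f k τ ∂ν := hswap
    _ = ∑' k, (1 / K) * (R k * (-s) ^ k / (Nat.factorial k : ℝ)) := tsum_congr hintk
    _ = (1 / K) * ∑' k, R k * (-s) ^ k / (Nat.factorial k : ℝ) := tsum_mul_left
end

section
/- Let ν be a Borel probability measure on (0,∞) with Gamma-ratio moments ∫_0^∞ τ^k dν(τ) = (1/K) ∏_{i=1}^m Γ(b_i + β_i(k+1)) / ∏_{j=1}^p Γ(a_j + α_j(k+1)) for all k ∈ ℕ, where β_i > 0, b_i + β_i > 0, α_j > 0, a_j + α_j > 0 and K = ∏_{i=1}^m Γ(b_i + β_i)/∏_{j=1}^p Γ(a_j + α_j). Let γ be the standard Gaussian measure on ℝ, let 𝐇 ∈ (0,1) and t ≥ 0. Then for every n ∈ ℕ: ∫_0^∞ ∫_ℝ (t^𝐇 √τ · x)^{2n+1} dγ(x) dν(τ) = 0 and ∫_0^∞ ∫_ℝ (t^𝐇 √τ · x)^{2n}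 dγ(x) dν(τ) = (1/K) · (∏_{i=1}^m Γ(b_i + β_i(n+1)) / ∏_{j=1}^p Γ(a_j + α_j(n+1))) · (2n)!/(n! 2^n) · t^{2n𝐇}; these are the moments of the generalized Fox-H process X_t^{𝐇,A,B} at time t, realized via its representation √Y · B_t^𝐇 with B_t^𝐇 ~ N(0, t^{2𝐇}). -/
open MeasureTheory ProbabilityTheory

section FoxHAux

open Real Filter Asymptotics


lemma integrableJ (k : ℕ) :
    Integrable (fun x : ℝ => x ^ k * Real.exp (-(1/2 : ℝ) * x ^ 2)) := by
  have h := integrable_rpow_mul_exp_neg_mul_sq (b := (1/2 : ℝ)) (by norm_num)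
    (s := (k : ℝ)) (lt_of_lt_of_le (by norm_num) (Nat.cast_nonneg k))
  simpa [Real.rpow_natCast] using h

lemma tendstoJ_top (k : ℕ) :
    Tendsto (fun x : ℝ => x ^ k * Real.exp (-(1/2 : ℝ) * x ^ 2)) atTop (nhds 0) := by
  have h := rpow_mul_exp_neg_mul_sq_isLittleO_exp_neg (b := (1/2 : ℝ)) (by norm_num) (k : ℝ)
  simp only [Real.rpow_natCast] at h
  refine h.isBigO.trans_tendsto ?_
  have : Tendsto (fun x : ℝ => -(1/2 : ℝ) * x) atTop atBot := by
    exact Tendsto.const_mul_atTop_of_neg (by norm_num) tendsto_id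
  exact Real.tendsto_exp_atBot.comp this

lemma tendstoJ_bot (k : ℕ) :
    Tendsto (fun x : ℝ => x ^ k * Real.exp (-(1/2 : ℝ) * x ^ 2)) atBot (nhds 0) := by
  have h := (tendstoJ_top k).comp tendsto_neg_atBot_atTop
  have h2 := h.const_mul ((-1 : ℝ) ^ k)
  rw [mul_zero] at h2
  convert h2 using 2 with x
  simp only [Function.comp]
  rw [neg_pow, neg_sq]
  ring_nf
  rw [mul_comm k 2, pow_mul]
  norm_num

lemma J_rec (k : ℕ) :
    ∫ x : ℝ, x ^ (k + 2) * Real.exp (-(1/2 : ℝ) * x ^ 2)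
      = ((k : ℝ) + 1) * ∫ x : ℝ, x ^ k * Real.exp (-(1/2 : ℝ) * x ^ 2) := by
  set E : ℝ → ℝ := fun x => Real.exp (-(1/2 : ℝ) * x ^ 2) with hE
  have hderiv : ∀ x : ℝ, HasDerivAt (fun x => -(x ^ (k + 1) * E x))
      (x ^ (k + 2) * E x - ((k : ℝ) + 1) * (x ^ k * E x)) x := by
    intro x
    have hE' : HasDerivAt E (E x * (-(1/2 : ℝ) * (2 * x ^ 1))) x := by
      exact (((hasDerivAt_pow 2 x).const_mul (-(1/2 : ℝ)))).exp
    have h := ((hasDerivAt_pow (k + 1) x).mul hE').neg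
    refine h.congr_deriv ?_
    simp only [hE]
    push_cast
    ring
  have hf' : Integrable (fun x : ℝ => x ^ (k + 2) * E x - ((k : ℝ) + 1) * (x ^ k * E x)) :=
    (integrableJ (k + 2)).sub ((integrableJ k).const_mul _)
  have htop : Tendsto (fun x : ℝ => -(x ^ (k + 1) * E x)) atTop (nhds 0) := by
    simpa only [neg_zero] using (tendstoJ_top (k + 1)).neg
  have hbot : Tendsto (fun x : ℝ => -(x ^ (k + 1) * E x)) atBot (nhds 0) := by
    simpa only [neg_zero] using (tendstoJ_bot (k + 1)).neg
  have h0 : ∫ x : ℝ, (x ^ (k + 2) * E x - ((k : ℝ) + 1) * (x ^ k * E x)) = 0 - 0 :=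
    integral_of_hasDerivAt_of_tendsto hderiv hf' hbot htop
  rw [integral_sub (integrableJ (k + 2)) ((integrableJ k).const_mul _),
    integral_const_mul] at h0
  linarith

lemma J_one : ∫ x : ℝ, x ^ 1 * Real.exp (-(1/2 : ℝ) * x ^ 2) = 0 := by
  set E : ℝ → ℝ := fun x => Real.exp (-(1/2 : ℝ) * x ^ 2) with hE
  have hderiv : ∀ x : ℝ, HasDerivAt (fun x => -E x) (x ^ 1 * E x) x := by
    intro x
    have hE' : HasDerivAt E (E x * (-(1/2 : ℝ) * (2 * x ^ 1))) x :=
      (((hasDerivAt_pow 2 x).const_mul (-(1/2 : ℝ)))).exp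
    refine hE'.neg.congr_deriv ?_
    ring
  have h0 : ∫ x : ℝ, x ^ 1 * E x = 0 - 0 :=
    integral_of_hasDerivAt_of_tendsto hderiv (integrableJ 1)
      (by simpa only [pow_zero, one_mul, neg_zero] using (tendstoJ_bot 0).neg)
      (by simpa only [pow_zero, one_mul, neg_zero] using (tendstoJ_top 0).neg)
  simpa only [sub_zero] using h0

lemma J_zero : ∫ x : ℝ, x ^ 0 * Real.exp (-(1/2 : ℝ) * x ^ 2) = Real.sqrt (2 * π) := by
  simp only [pow_zero, one_mul]
  have h := integral_gaussian (1/2 : ℝ)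
  rw [show π / (1/2 : ℝ) = 2 * π by ring] at h
  convert h using 2 with x

lemma J_odd (n : ℕ) : ∫ x : ℝ, x ^ (2 * n + 1) * Real.exp (-(1/2 : ℝ) * x ^ 2) = 0 := by
  induction n with
  | zero => simpa using J_one
  | succ n ih =>
    have h : 2 * (n + 1) + 1 = (2 * n + 1) + 2 := by ring
    rw [h, J_rec, ih, mul_zero]

lemma J_even (n : ℕ) : ∫ x : ℝ, x ^ (2 * n) * Real.exp (-(1/2 : ℝ) * x ^ 2)
    = ((Nat.factorial (2 * n) : ℝ) / ((Nat.factorial n : ℝ) * 2 ^ n)) * Real.sqrt (2 * π) := by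
  induction n with
  | zero => simpa using J_zero
  | succ n ih =>
    have h : 2 * (n + 1) = 2 * n + 2 := by ring
    rw [h, J_rec, ih]
    have e1 : (Nat.factorial (2 * n + 2) : ℝ)
        = (2 * (n : ℝ) + 2) * ((2 * (n : ℝ) + 1) * (Nat.factorial (2 * n) : ℝ)) := by
      rw [show 2 * n + 2 = (2 * n + 1) + 1 from rfl, Nat.factorial_succ, Nat.factorial_succ]
      push_cast; ring
    have e2 : (Nat.factorial (n + 1) : ℝ) = ((n : ℝ) + 1) * (Nat.factorial n : ℝ) := by
      rw [Nat.factorial_succ]; push_cast; ring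
    have h1 : (Nat.factorial n : ℝ) ≠ 0 := Nat.cast_ne_zero.mpr (Nat.factorial_ne_zero n)
    have h2 : ((n : ℝ) + 1) ≠ 0 := by positivity
    have h3 : (2 : ℝ) ^ n ≠ 0 := by positivity
    rw [e1, e2]
    push_cast
    field_simp
    ring

lemma integral_gaussianReal_eq (g : ℝ → ℝ) :
    ∫ x, g x ∂(gaussianReal 0 1)
      = (Real.sqrt (2 * π))⁻¹ * ∫ x, g x * Real.exp (-(1/2 : ℝ) * x ^ 2) := by
  rw [gaussianReal_of_var_ne_zero 0 one_ne_zero]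
  have hmeas : Measurable fun x => (gaussianPDFReal 0 1 x).toNNReal :=
    (measurable_gaussianPDFReal 0 1).real_toNNReal
  have heq : gaussianPDF 0 1 = fun x => ((gaussianPDFReal 0 1 x).toNNReal : ENNReal) := rfl
  rw [heq, integral_withDensity_eq_integral_smul hmeas]
  rw [← integral_const_mul]
  refine integral_congr_ae (Filter.Eventually.of_forall fun x => ?_)
  simp only [NNReal.smul_def, Real.coe_toNNReal _ (gaussianPDFReal_nonneg _ _ _)]
  have : gaussianPDFReal 0 1 x = (Real.sqrt (2 * π))⁻¹ * Real.exp (-(1/2 : ℝ) * x ^ 2) := by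
    unfold gaussianPDFReal
    norm_num
    left
    ring_nf
  rw [this, smul_eq_mul]
  ring

lemma gauss_moment_odd (n : ℕ) :
    ∫ x, x ^ (2 * n + 1) ∂(gaussianReal 0 1) = 0 := by
  rw [integral_gaussianReal_eq, J_odd, mul_zero]

lemma gauss_moment_even (n : ℕ) :
    ∫ x, x ^ (2 * n) ∂(gaussianReal 0 1)
      = (Nat.factorial (2 * n) : ℝ) / ((Nat.factorial n : ℝ) * 2 ^ n) := by
  rw [integral_gaussianReal_eq, J_even]
  have h : Real.sqrt (2 * π) ≠ 0 := by positivity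
  field_simp

end FoxHAux

/-- Moments of the generalized Fox-H process `X_t^{𝐇,A,B}` at time `t`, realized via its
representation `t^𝐇 √Y G` with `Y ~ ν` (Gamma-ratio moments) independent of the standard
Gaussian `G`: odd moments vanish and even ones are given by the Gamma-ratio formula
times `(2n)!/(n! 2^n) · t^{2n𝐇}`. -/
theorem generalized_FoxH_process_moments
    (m p : ℕ) (b β : Fin m → ℝ) (a α : Fin p → ℝ)
    (hβ : ∀ i, 0 < β i) (hbβ : ∀ i, 0 < b i + β i)
    (hα : ∀ j, 0 < α j) (haα : ∀ j, 0 < a j + α j)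
    (K : ℝ) (hK : K = (∏ i, Real.Gamma (b i + β i)) / (∏ j, Real.Gamma (a j + α j)))
    (ν : Measure ℝ) [IsProbabilityMeasure ν] (hsupp : ν (Set.Iic 0) = 0)
    (hint : ∀ k : ℕ, Integrable (fun τ : ℝ => τ ^ k) ν)
    (hmom : ∀ k : ℕ, ∫ τ, τ ^ k ∂ν
      = (1 / K) * (∏ i, Real.Gamma (b i + β i * (k + 1)))
          / (∏ j, Real.Gamma (a j + α j * (k + 1))))
    (H : ℝ) (hH : H ∈ Set.Ioo (0 : ℝ) 1) (t : ℝ) (ht : 0 ≤ t) (n : ℕ) :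
    (∫ τ, (∫ x, (t ^ H * Real.sqrt τ * x) ^ (2 * n + 1) ∂(gaussianReal 0 1)) ∂ν) = 0 ∧
    (∫ τ, (∫ x, (t ^ H * Real.sqrt τ * x) ^ (2 * n) ∂(gaussianReal 0 1)) ∂ν)
      = (1 / K) * ((∏ i, Real.Gamma (b i + β i * (n + 1)))
            / (∏ j, Real.Gamma (a j + α j * (n + 1))))
          * ((Nat.factorial (2 * n) : ℝ) / ((Nat.factorial n : ℝ) * 2 ^ n))
          * t ^ (2 * (n : ℝ) * H) := by
  set M : ℝ := (Nat.factorial (2 * n) : ℝ) / ((Nat.factorial n : ℝ) * 2 ^ n) with hM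
  constructor
  · have hodd : ∀ τ : ℝ,
        (∫ x, (t ^ H * Real.sqrt τ * x) ^ (2 * n + 1) ∂(gaussianReal 0 1)) = 0 := by
      intro τ
      simp_rw [mul_pow]
      rw [integral_const_mul, gauss_moment_odd, mul_zero]
    simp only [hodd, integral_zero]
  · have hpos : ∀ᵐ τ ∂ν, 0 < τ := by
      rw [ae_iff]
      have : {τ : ℝ | ¬ 0 < τ} = Set.Iic 0 := by ext τ; simp [not_lt]
      rw [this]; exact hsupp
    have hpow : (t ^ H) ^ (2 * n) = t ^ (2 * (n : ℝ) * H) := by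
      rw [← Real.rpow_natCast (t ^ H) (2 * n), ← Real.rpow_mul ht]
      congr 1
      push_cast
      ring
    have heven : ∀ τ : ℝ,
        (∫ x, (t ^ H * Real.sqrt τ * x) ^ (2 * n) ∂(gaussianReal 0 1))
          = (t ^ H) ^ (2 * n) * Real.sqrt τ ^ (2 * n) * M := by
      intro τ
      simp_rw [mul_pow]
      rw [integral_const_mul, gauss_moment_even, ← hM]
    calc (∫ τ, (∫ x, (t ^ H * Real.sqrt τ * x) ^ (2 * n) ∂(gaussianReal 0 1)) ∂ν)
        = ∫ τ, (t ^ H) ^ (2 * n) * Real.sqrt τ ^ (2 * n) * M ∂ν := by simp_rw [heven]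
      _ = ∫ τ, (t ^ (2 * (n : ℝ) * H) * M) * τ ^ n ∂ν := by
          refine integral_congr_ae (hpos.mono fun τ hτ => ?_)
          dsimp only
          rw [hpow, show Real.sqrt τ ^ (2 * n) = τ ^ n by
            rw [pow_mul, Real.sq_sqrt hτ.le]]
          ring
      _ = (t ^ (2 * (n : ℝ) * H) * M) * ∫ τ, τ ^ n ∂ν := integral_const_mul _ _
      _ = _ := by rw [hmom n]; ring
end

section
/- Let 𝐇 ∈ (0,1) and for t ≥ 0 define φ_t : ℝ → ℝ by φ_t(x) = (t − x)_+^{𝐇−1/2} − (−x)_+^{𝐇−1/2}, where y_+^a := y^a if y > 0 and 0 otherwise. Let c_𝐇 := 1/(2𝐇) + ∫_0^∞ ((1+s)^{𝐇−1/2} − s^{𝐇−1/2})² ds. Then for all t₁, t₂ ≥ 0, φ_{t₁} and φ_{t₂} are square-integrable on ℝ and ∫_ℝ φ_{t₁}(x) φ_{t₂}(x) dx = (c_𝐇/2) · (t₁^{2𝐇} + t₂^{2𝐇} − |t₁ − t₂|^{2𝐇}). -/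
open MeasureTheory

/-- `y_+^a := y^a` if `y > 0` and `0` otherwise. -/
noncomputable def plusPow (y a : ℝ) : ℝ := if 0 < y then y ^ a else 0

/-- The fractional kernel `φ_t(x) = (t−x)_+^{𝐇−1/2} − (−x)_+^{𝐇−1/2}`. -/
noncomputable def fracKernel (H t x : ℝ) : ℝ :=
  plusPow (t - x) (H - 1 / 2) - plusPow (-x) (H - 1 / 2)

/-- The normalizing constant `c_𝐇 = 1/(2𝐇) + ∫₀^∞ ((1+s)^{𝐇−1/2} − s^{𝐇−1/2})² ds`. -/
noncomputable def cH (H : ℝ) : ℝ :=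
  1 / (2 * H) + ∫ s in Set.Ioi (0 : ℝ), ((1 + s) ^ (H - 1 / 2) - s ^ (H - 1 / 2)) ^ 2

open Set Real

section Aux

variable {H : ℝ}

lemma measurable_fracKernel (H t : ℝ) : Measurable (fracKernel H t) := by
  unfold fracKernel plusPow
  apply Measurable.sub <;>
  · apply Measurable.ite
    · exact measurableSet_lt measurable_const (by fun_prop)
    · fun_prop
    · fun_prop

lemma plusPow_const_mul {t : ℝ} (ht : 0 < t) (y a : ℝ) :
    plusPow (t * y) a = t ^ a * plusPow y a := by
  unfold plusPow
  by_cases hy : 0 < y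
  · rw [if_pos (mul_pos ht hy), if_pos hy, Real.mul_rpow ht.le hy.le]
  · rw [if_neg hy, if_neg (fun h => hy (by nlinarith)), mul_zero]

lemma fracKernel_scale {t : ℝ} (ht : 0 < t) (y : ℝ) :
    fracKernel H t (t * y) = t ^ (H - 1 / 2) * fracKernel H 1 y := by
  unfold fracKernel
  rw [show t - t * y = t * (1 - y) by ring, show -(t * y) = t * (-y) by ring,
    plusPow_const_mul ht, plusPow_const_mul ht, mul_sub]

lemma fracKernel_sub (t₁ t₂ x : ℝ) :
    fracKernel H t₁ x - fracKernel H t₂ x = fracKernel H (t₁ - t₂) (x - t₂) := by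
  unfold fracKernel
  rw [show t₁ - t₂ - (x - t₂) = t₁ - x by ring, show -(x - t₂) = t₂ - x by ring]
  ring

lemma fracKernel_of_neg {t x : ℝ} (ht : 0 ≤ t) (hx : x < 0) :
    fracKernel H t x = (t - x) ^ (H - 1 / 2) - (-x) ^ (H - 1 / 2) := by
  unfold fracKernel plusPow
  rw [if_pos (by linarith), if_pos (by linarith)]

lemma fracKernel_of_mid {t x : ℝ} (hx : 0 ≤ x) (hxt : x < t) :
    fracKernel H t x = (t - x) ^ (H - 1 / 2) := by
  unfold fracKernel plusPow
  rw [if_pos (by linarith), if_neg (by linarith), sub_zero]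

lemma fracKernel_of_ge {t x : ℝ} (hx : 0 ≤ x) (hxt : t ≤ x) :
    fracKernel H t x = 0 := by
  unfold fracKernel plusPow
  rw [if_neg (by linarith), if_neg (by linarith), sub_zero]

end Aux

section Main
variable {H : ℝ}

lemma diff_bound (hH : H ∈ Set.Ioo (0:ℝ) 1) {s : ℝ} (hs : 1 ≤ s) :
    |(1 + s) ^ (H - 1/2) - s ^ (H - 1/2)| ≤ |H - 1/2| * s ^ (H - 1/2 - 1) := by
  set a := H - 1/2 with ha
  have hs0 : 0 < s := lt_of_lt_of_le one_pos hs
  have hcont : ContinuousOn (fun x : ℝ => x ^ a) (Icc s (s + 1)) := fun x hx =>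
    (Real.continuousAt_rpow_const x a (Or.inl (by nlinarith [hx.1] : x ≠ 0))).continuousWithinAt
  have hderiv : ∀ x ∈ Ioo s (s + 1), HasDerivAt (fun x : ℝ => x ^ a) (a * x ^ (a - 1)) x :=
    fun x hx => Real.hasDerivAt_rpow_const (Or.inl (by nlinarith [hx.1]))
  obtain ⟨c, hc, hceq⟩ := exists_hasDerivAt_eq_slope (fun x : ℝ => x ^ a)
    (fun x => a * x ^ (a - 1)) (by linarith) hcont hderiv
  have h1 : (1 + s) ^ a - s ^ a = a * c ^ (a - 1) := by
    rw [hceq, add_comm 1 s]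
    simp
  rw [h1, abs_mul]
  have hc0 : 0 < c := lt_trans hs0 hc.1
  have : |c ^ (a - 1)| = c ^ (a - 1) := abs_of_nonneg (Real.rpow_nonneg hc0.le _)
  rw [this]
  exact mul_le_mul_of_nonneg_left
    (Real.rpow_le_rpow_of_nonpos hs0 hc.1.le (by rw [ha]; cases hH; linarith)) (abs_nonneg a)

lemma g_integrableOn (hH : H ∈ Set.Ioo (0:ℝ) 1) :
    IntegrableOn (fun s : ℝ => ((1 + s) ^ (H - 1/2) - s ^ (H - 1/2)) ^ 2) (Ioi (0:ℝ)) := by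
  obtain ⟨hH0, hH1⟩ := hH
  set a := H - 1/2 with ha
  have meas : Measurable fun s : ℝ => ((1 + s) ^ a - s ^ a) ^ 2 := by fun_prop
  rw [← Ioc_union_Ioi_eq_Ioi (zero_le_one (α := ℝ))]
  apply IntegrableOn.union
  · -- on Ioc 0 1
    have hint : IntegrableOn (fun s : ℝ => 4 + 2 * s ^ (a * 2)) (Ioc (0:ℝ) 1) := by
      apply Integrable.add
      · exact integrableOn_const measure_Ioc_lt_top.ne
      · have := (intervalIntegral.intervalIntegrable_rpow'
          (a := 0) (b := 1) (r := a * 2) (by rw [ha]; linarith)).1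
        exact this.const_mul 2
    apply hint.mono' (meas.aestronglyMeasurable.restrict)
    filter_upwards [ae_restrict_mem measurableSet_Ioc] with s hs
    obtain ⟨hs0, hs1⟩ := hs
    have h1 : ((1 + s) ^ a) ^ 2 ≤ 2 := by
      rw [← Real.rpow_natCast ((1+s)^a) 2, ← Real.rpow_mul (by linarith)]
      calc (1 + s) ^ (a * (2:ℕ)) ≤ (1 + s) ^ (1:ℝ) :=
            Real.rpow_le_rpow_of_exponent_le (by linarith) (by push_cast; rw [ha]; linarith)
        _ ≤ 2 := by rw [Real.rpow_one]; linarith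
    have h2 : (s ^ a) ^ 2 = s ^ (a * 2) := by
      rw [← Real.rpow_natCast (s ^ a) 2, ← Real.rpow_mul hs0.le]
      norm_num
    have hnn : (0:ℝ) ≤ (1 + s) ^ a := Real.rpow_nonneg (by linarith) _
    have hnn2 : (0:ℝ) ≤ s ^ a := Real.rpow_nonneg hs0.le _
    rw [Real.norm_eq_abs, abs_of_nonneg (sq_nonneg _)]
    nlinarith [sq_nonneg ((1 + s) ^ a + s ^ a)]
  · -- on Ioi 1
    have hint : IntegrableOn (fun s : ℝ => a ^ 2 * s ^ (a * 2 - 2)) (Ioi (1:ℝ)) :=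
      (integrableOn_Ioi_rpow_of_lt (by rw [ha]; linarith) one_pos).const_mul _
    apply hint.mono' (meas.aestronglyMeasurable.restrict)
    filter_upwards [ae_restrict_mem measurableSet_Ioi] with s hs
    have hs1 : (1:ℝ) ≤ s := le_of_lt hs
    have hs0 : (0:ℝ) < s := lt_of_lt_of_le one_pos hs1
    have hb := diff_bound ⟨hH0, hH1⟩ hs1
    rw [Real.norm_eq_abs, abs_of_nonneg (sq_nonneg _), ← sq_abs]
    calc |(1 + s) ^ a - s ^ a| ^ 2 ≤ (|a| * s ^ (a - 1)) ^ 2 := by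
          apply sq_le_sq' _ hb
          have : (0:ℝ) ≤ |a| * s ^ (a-1) := mul_nonneg (abs_nonneg _) (Real.rpow_nonneg hs0.le _)
          linarith [abs_nonneg ((1 + s) ^ a - s ^ a)]
      _ = a ^ 2 * s ^ (a * 2 - 2) := by
          rw [mul_pow, sq_abs, ← Real.rpow_natCast (s ^ (a-1)) 2, ← Real.rpow_mul hs0.le]
          norm_num
          ring_nf
          exact Or.inl trivial

end Main

section Key
variable {H : ℝ}

lemma key_one (hH : H ∈ Set.Ioo (0:ℝ) 1) :
    Integrable (fun x : ℝ => fracKernel H 1 x ^ 2) ∧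
    ∫ x : ℝ, fracKernel H 1 x ^ 2 = cH H := by
  obtain ⟨hH0, hH1⟩ := hH
  have hEqNeg : ∀ x ∈ Ioi (0:ℝ),
      ((1 + x) ^ (H - 1/2) - x ^ (H - 1/2)) ^ 2 = fracKernel H 1 (-x) ^ 2 := by
    intro x hx
    rw [fracKernel_of_neg zero_le_one (by simpa using hx : (-x:ℝ) < 0)]
    rw [neg_neg, sub_neg_eq_add, add_comm (1:ℝ) x]
  -- Integrability on `Iic 0`
  have hneg : IntegrableOn (fun x : ℝ => fracKernel H 1 (-x) ^ 2) (Ici (0:ℝ)) := by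
    rw [integrableOn_Ici_iff_integrableOn_Ioi]
    exact (g_integrableOn ⟨hH0, hH1⟩).congr_fun hEqNeg measurableSet_Ioi
  have hIic : IntegrableOn (fun x : ℝ => fracKernel H 1 x ^ 2) (Iic (0:ℝ)) := by
    have m : MeasurableEmbedding fun x : ℝ => -x := (Homeomorph.neg ℝ).measurableEmbedding
    have h2 : IntegrableOn (fun x : ℝ => fracKernel H 1 x ^ 2) (Iic 0)
        (Measure.map (fun x : ℝ => -x) volume) := by
      rw [m.integrableOn_map_iff]
      simpa [Function.comp_def, neg_preimage, neg_Iic, neg_zero] using hneg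
    rwa [Measure.map_neg_eq_self] at h2
  have hIicVal : ∫ x in Iic (0:ℝ), fracKernel H 1 x ^ 2
      = ∫ s in Ioi (0:ℝ), ((1 + s) ^ (H - 1/2) - s ^ (H - 1/2)) ^ 2 := by
    rw [show Iic (0:ℝ) = Iic (-0) by norm_num, ← integral_comp_neg_Ioi]
    exact (setIntegral_congr_fun measurableSet_Ioi hEqNeg).symm
  -- on `Ioo 0 1`
  have hEqMid : ∀ x ∈ Ioo (0:ℝ) 1, fracKernel H 1 x ^ 2 = (1 - x) ^ ((H - 1/2) * 2) := by
    intro x hx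
    rw [fracKernel_of_mid hx.1.le hx.2,
      Real.rpow_mul (by linarith [hx.2] : (0:ℝ) ≤ 1 - x), Real.rpow_two]
  have hmid_int0 : IntegrableOn (fun x : ℝ => (1 - x) ^ ((H - 1/2) * 2)) (Ioo (0:ℝ) 1) := by
    have h1 : IntervalIntegrable (fun x : ℝ => x ^ ((H - 1/2) * 2)) volume 0 1 :=
      intervalIntegral.intervalIntegrable_rpow' (by linarith)
    have h2 := (h1.comp_sub_left 1).symm
    have h3 : IntervalIntegrable (fun x : ℝ => (1 - x) ^ ((H - 1/2) * 2)) volume 0 1 := by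
      simpa using h2
    exact ((intervalIntegrable_iff_integrableOn_Ioc_of_le zero_le_one).mp h3).mono_set
      Ioo_subset_Ioc_self
  have hmid : IntegrableOn (fun x : ℝ => fracKernel H 1 x ^ 2) (Ioo (0:ℝ) 1) :=
    hmid_int0.congr_fun (fun x hx => (hEqMid x hx).symm) measurableSet_Ioo
  have hmidVal : ∫ x in Ioo (0:ℝ) 1, fracKernel H 1 x ^ 2 = 1 / (2 * H) := by
    rw [setIntegral_congr_fun measurableSet_Ioo hEqMid,
      ← integral_Ioc_eq_integral_Ioo, ← intervalIntegral.integral_of_le zero_le_one,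
      intervalIntegral.integral_comp_sub_left (fun x : ℝ => x ^ ((H - 1/2) * 2)) 1]
    norm_num
    rw [integral_rpow (Or.inl (by linarith))]
    rw [Real.one_rpow, Real.zero_rpow (by intro h; nlinarith [h] : (H - 1/2) * 2 + 1 ≠ 0)]
    rw [show (H - 1/2) * 2 + 1 = 2 * H by ring]
    norm_num
  -- on `Ici 1`
  have hEqHi : ∀ x ∈ Ici (1:ℝ), fracKernel H 1 x ^ 2 = 0 := by
    intro x hx
    rw [fracKernel_of_ge (by linarith [mem_Ici.mp hx]) (mem_Ici.mp hx)]
    norm_num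
  have hHi : IntegrableOn (fun x : ℝ => fracKernel H 1 x ^ 2) (Ici (1:ℝ)) := by
    rw [integrableOn_congr_fun hEqHi measurableSet_Ici]
    exact integrableOn_zero
  have hHiVal : ∫ x in Ici (1:ℝ), fracKernel H 1 x ^ 2 = 0 := by
    rw [setIntegral_congr_fun measurableSet_Ici hEqHi]
    simp
  -- assemble
  have hIoi : IntegrableOn (fun x : ℝ => fracKernel H 1 x ^ 2) (Ioi (0:ℝ)) := by
    rw [← Ioo_union_Ici_eq_Ioi (zero_lt_one (α := ℝ))]
    exact hmid.union hHi
  have hInt : Integrable (fun x : ℝ => fracKernel H 1 x ^ 2) := by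
    rw [← integrableOn_univ, ← Iic_union_Ioi (a := (0:ℝ))]
    exact hIic.union hIoi
  refine ⟨hInt, ?_⟩
  have hsplit2 := setIntegral_union ((Iio_disjoint_Ici le_rfl).mono_left Ioo_subset_Iio_self) measurableSet_Ici hmid hHi
    (f := fun x : ℝ => fracKernel H 1 x ^ 2) (μ := volume)
  rw [Ioo_union_Ici_eq_Ioi (zero_lt_one (α := ℝ))] at hsplit2
  have hsplit1 := setIntegral_union (Iic_disjoint_Ioi le_rfl) measurableSet_Ioi hIic hIoi
    (f := fun x : ℝ => fracKernel H 1 x ^ 2) (μ := volume)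
  rw [Iic_union_Ioi, setIntegral_univ] at hsplit1
  rw [hsplit1, hsplit2, hIicVal, hmidVal, hHiVal, cH]
  ring

end Key

section Final
variable {H : ℝ}

lemma key (hH : H ∈ Set.Ioo (0:ℝ) 1) {t : ℝ} (ht : 0 ≤ t) :
    Integrable (fun x : ℝ => fracKernel H t x ^ 2) ∧
    ∫ x : ℝ, fracKernel H t x ^ 2 = cH H * t ^ (2 * H) := by
  obtain ⟨hH0, hH1⟩ := hH
  rcases eq_or_lt_of_le ht with rfl | htpos
  · have hzero : (fun x : ℝ => fracKernel H 0 x ^ 2) = fun _ => (0:ℝ) := by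
      funext x; simp [fracKernel, zero_sub]
    refine ⟨by rw [hzero]; exact integrable_zero _ _ _, ?_⟩
    rw [hzero, Real.zero_rpow (by positivity : (2:ℝ) * H ≠ 0)]
    simp
  · obtain ⟨hint1, hval1⟩ := key_one ⟨hH0, hH1⟩
    have hfun : (fun y : ℝ => fracKernel H t (t * y) ^ 2)
        = fun y : ℝ => (t ^ (H - 1/2)) ^ 2 * fracKernel H 1 y ^ 2 := by
      funext y; rw [fracKernel_scale htpos, mul_pow]
    have hint2 : Integrable (fun y : ℝ => fracKernel H t (t * y) ^ 2) := by
      rw [hfun]; exact hint1.const_mul _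
    have hint : Integrable (fun x : ℝ => fracKernel H t x ^ 2) :=
      (integrable_comp_mul_left_iff (fun x : ℝ => fracKernel H t x ^ 2) htpos.ne').mp hint2
    refine ⟨hint, ?_⟩
    have h3 : (∫ y : ℝ, fracKernel H t (t * y) ^ 2) = |t⁻¹| • ∫ x : ℝ, fracKernel H t x ^ 2 :=
      Measure.integral_comp_mul_left (fun x : ℝ => fracKernel H t x ^ 2) t
    rw [hfun, integral_const_mul, hval1, abs_of_nonneg (inv_nonneg.2 ht), smul_eq_mul] at h3
    have hI : ∫ x : ℝ, fracKernel H t x ^ 2 = t * ((t ^ (H - 1/2)) ^ 2 * cH H) := by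
      rw [h3, mul_inv_cancel_left₀ htpos.ne']
    have hpow : t * (t ^ (H - 1/2)) ^ 2 = t ^ (2 * H) := by
      rw [sq, ← Real.rpow_add htpos, show (H - 1/2) + (H - 1/2) = 2*H - 1 by ring]
      nth_rewrite 1 [← Real.rpow_one t]
      rw [← Real.rpow_add htpos]
      ring_nf
    rw [hI, show t * ((t ^ (H - 1/2)) ^ 2 * cH H) = cH H * (t * (t ^ (H - 1/2)) ^ 2) by ring,
      hpow]

lemma inner_calc (hH : H ∈ Set.Ioo (0:ℝ) 1) {t₁ t₂ : ℝ} (ht₂ : 0 ≤ t₂) (h : t₂ ≤ t₁) :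
    ∫ x : ℝ, fracKernel H t₁ x * fracKernel H t₂ x
      = cH H / 2 * (t₁ ^ (2 * H) + t₂ ^ (2 * H) - |t₁ - t₂| ^ (2 * H)) := by
  have ht₁ : 0 ≤ t₁ := le_trans ht₂ h
  obtain ⟨i1, v1⟩ := key hH ht₁
  obtain ⟨i2, v2⟩ := key hH ht₂
  obtain ⟨iD0, vD0⟩ := key hH (sub_nonneg.2 h)
  have hfun : (fun x : ℝ => (fracKernel H t₁ x - fracKernel H t₂ x) ^ 2)
      = fun x : ℝ => fracKernel H (t₁ - t₂) (x - t₂) ^ 2 := by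
    funext x; rw [fracKernel_sub]
  have iD : Integrable (fun x : ℝ => (fracKernel H t₁ x - fracKernel H t₂ x) ^ 2) := by
    rw [hfun]; exact iD0.comp_sub_right t₂
  have vD : ∫ x : ℝ, (fracKernel H t₁ x - fracKernel H t₂ x) ^ 2
      = cH H * (t₁ - t₂) ^ (2 * H) := by
    rw [hfun, integral_sub_right_eq_self (fun x : ℝ => fracKernel H (t₁ - t₂) x ^ 2) t₂, vD0]
  have hpoint : (fun x : ℝ => fracKernel H t₁ x * fracKernel H t₂ x)
      = fun x : ℝ => (fracKernel H t₁ x ^ 2 + fracKernel H t₂ x ^ 2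
          - (fracKernel H t₁ x - fracKernel H t₂ x) ^ 2) / 2 := by
    funext x; ring
  have iAdd : Integrable (fun x : ℝ => fracKernel H t₁ x ^ 2 + fracKernel H t₂ x ^ 2) :=
    i1.add i2
  rw [hpoint, integral_div, integral_sub iAdd iD, integral_add i1 i2, v1, v2, vD,
    abs_of_nonneg (sub_nonneg.2 h)]
  ring

end Final

/-- The fractional kernels `φ_{t₁}, φ_{t₂}` are square-integrable on `ℝ` and their
inner product is `(c_𝐇/2)(t₁^{2𝐇} + t₂^{2𝐇} − |t₁−t₂|^{2𝐇})`. -/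
theorem fracKernel_inner_product
    (H : ℝ) (hH : H ∈ Set.Ioo (0 : ℝ) 1) (t₁ t₂ : ℝ) (ht₁ : 0 ≤ t₁) (ht₂ : 0 ≤ t₂) :
    Integrable (fun x : ℝ => (fracKernel H t₁ x) ^ 2) ∧
    Integrable (fun x : ℝ => (fracKernel H t₂ x) ^ 2) ∧
    ∫ x : ℝ, fracKernel H t₁ x * fracKernel H t₂ x
      = cH H / 2 * (t₁ ^ (2 * H) + t₂ ^ (2 * H) - |t₁ - t₂| ^ (2 * H)) := by
  refine ⟨(key hH ht₁).1, (key hH ht₂).1, ?_⟩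
  rcases le_total t₂ t₁ with h | h
  · exact inner_calc hH ht₂ h
  · have h2 := inner_calc hH ht₁ h
    simp_rw [mul_comm (fracKernel H t₂ _) (fracKernel H t₁ _)] at h2
    rw [h2, abs_sub_comm t₂ t₁]
    ring
end

section
/- Let 𝐇 ∈ (0,1), let φ_t(x) = (t − x)_+^{𝐇−1/2} − (−x)_+^{𝐇−1/2} for t ≥ 0, and let c_𝐇 = 1/(2𝐇) + ∫_0^∞ ((1+s)^{𝐇−1/2} − s^{𝐇−1/2})² ds. Then for all t ≥ s ≥ 0, ∫_ℝ (φ_t(x) − φ_s(x))² dx = c_𝐇 · (t − s)^{2𝐇}; i.e., the L²-norm squared of the increment kernel depends only on t − s, which yields the stationarity of increments of the associated process. -/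
open MeasureTheory Set

lemma FBM.plusPow_of_pos {y : ℝ} (h : 0 < y) (a : ℝ) : plusPow y a = y ^ a := if_pos h

lemma FBM.plusPow_of_nonpos {y : ℝ} (h : y ≤ 0) (a : ℝ) : plusPow y a = 0 :=
  if_neg (not_lt.mpr h)

lemma FBM.measurable_plusPow (a : ℝ) : Measurable (fun y : ℝ => plusPow y a) := by
  unfold plusPow
  exact Measurable.ite measurableSet_Ioi (by fun_prop) measurable_const

lemma FBM.plusPow_mul {δ : ℝ} (hδ : 0 < δ) (y a : ℝ) :
    plusPow (δ * y) a = δ ^ a * plusPow y a := by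
  rcases lt_or_ge 0 y with hy | hy
  · rw [FBM.plusPow_of_pos hy, FBM.plusPow_of_pos (mul_pos hδ hy), Real.mul_rpow hδ.le hy.le]
  · rw [FBM.plusPow_of_nonpos hy, FBM.plusPow_of_nonpos (by nlinarith : δ * y ≤ 0), mul_zero]

lemma FBM.sq_rpow {x : ℝ} (hx : 0 ≤ x) (a : ℝ) : (x ^ a) ^ 2 = x ^ (2 * a) := by
  rw [← Real.rpow_natCast (x ^ a) 2, ← Real.rpow_mul hx, mul_comm]
  norm_num

lemma FBM.tail_bound {a : ℝ} (ha₁ : -(1/2 : ℝ) < a) (ha₂ : a < 1/2) {s : ℝ} (hs : 1 ≤ s) :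
    |(1 + s) ^ a - s ^ a| ≤ |a| * s ^ (a - 1) := by
  have hs0 : (0 : ℝ) < s := lt_of_lt_of_le one_pos hs
  rcases eq_or_ne a 0 with rfl | ha
  · simp
  · have h0 : (0 : ℝ) ∉ Set.uIcc s (s + 1) := by
      rw [Set.uIcc_of_le (by linarith)]
      simp only [Set.mem_Icc, not_and]
      intro h; linarith
    have hval := integral_rpow (a := s) (b := s + 1) (r := a - 1)
      (Or.inr ⟨by intro h; apply ha; linarith [sub_eq_iff_eq_add.mp h], h0⟩)
    have hexp : a - 1 + 1 = a := by ring
    rw [hexp] at hval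
    have hInt : IntervalIntegrable (fun x : ℝ => x ^ (a - 1)) volume s (s + 1) := by
      apply ContinuousOn.intervalIntegrable
      intro x hx
      rw [Set.uIcc_of_le (by linarith)] at hx
      exact (Real.continuousAt_rpow_const x _ (Or.inl (by linarith [hx.1] : x ≠ 0))).continuousWithinAt
    have hnn : 0 ≤ ∫ x in s..(s+1), x ^ (a - 1) := by
      apply intervalIntegral.integral_nonneg (by linarith)
      intro u hu
      exact Real.rpow_nonneg (by linarith [hu.1]) _
    have hle : (∫ x in s..(s+1), x ^ (a - 1)) ≤ s ^ (a - 1) := by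
      have hmono := intervalIntegral.integral_mono_on (g := fun _ : ℝ => s ^ (a-1))
        (by linarith : s ≤ s + 1) hInt intervalIntegrable_const
        (fun x hx => Real.rpow_le_rpow_of_nonpos hs0 hx.1 (by linarith))
      simpa using hmono
    have hdiff : (1 + s) ^ a - s ^ a = a * ∫ x in s..(s+1), x ^ (a - 1) := by
      rw [hval]
      field_simp
      ring_nf
    rw [hdiff, abs_mul, abs_of_nonneg hnn]
    exact mul_le_mul_of_nonneg_left hle (abs_nonneg a)

lemma FBM.integrableOn_Iic_comp_neg {f : ℝ → ℝ}
    (h : IntegrableOn (fun x => f (-x)) (Ici (0:ℝ))) : IntegrableOn f (Iic (0:ℝ)) := by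
  have A : MeasurableEmbedding (fun x : ℝ => -x) :=
    (Homeomorph.neg ℝ).isClosedEmbedding.measurableEmbedding
  have key : (volume : Measure ℝ).restrict (Iic 0)
      = ((volume : Measure ℝ).restrict (Ici 0)).map (fun x : ℝ => -x) := by
    conv_lhs => rw [← Measure.map_neg_eq_self (volume : Measure ℝ)]
    rw [Measure.restrict_map A.measurable measurableSet_Iic]
    congr 1
    ext x
    simp
  rw [IntegrableOn, key, A.integrable_map_iff]
  exact h

lemma FBM.psi_eqOn_Ici : ∀ a : ℝ, ∀ x ∈ Ici (1:ℝ),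
    (plusPow (1 - x) a - plusPow (-x) a) ^ 2 = 0 := by
  intro a x hx
  have hx1 : (1:ℝ) ≤ x := hx
  rw [FBM.plusPow_of_nonpos (by linarith), FBM.plusPow_of_nonpos (by linarith)]
  ring

lemma FBM.psi_sq_integrable {a : ℝ} (ha₁ : -(1/2 : ℝ) < a) (ha₂ : a < 1/2) :
    Integrable (fun x : ℝ => (plusPow (1 - x) a - plusPow (-x) a) ^ 2) := by
  set g : ℝ → ℝ := fun x => (plusPow (1 - x) a - plusPow (-x) a) ^ 2 with hg
  have meas : Measurable g := by
    apply Measurable.pow_const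
    exact ((FBM.measurable_plusPow a).comp (by fun_prop)).sub
      ((FBM.measurable_plusPow a).comp (by fun_prop))
  have hIci1 : IntegrableOn g (Ici (1:ℝ)) := by
    have : IntegrableOn (fun _ : ℝ => (0:ℝ)) (Ici (1:ℝ)) := integrableOn_zero
    exact this.congr_fun (fun x hx => (FBM.psi_eqOn_Ici a x hx).symm) measurableSet_Ici
  have hIoo : IntegrableOn g (Ioo (0:ℝ) 1) := by
    have h1 : IntervalIntegrable (fun x : ℝ => (1 - x) ^ (2*a)) volume 0 1 := by
      have h0 := intervalIntegral.intervalIntegrable_rpow' (a := 0) (b := 1) (r := 2*a)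
        (by linarith)
      simpa using (h0.comp_sub_left 1).symm
    have h3 : IntegrableOn (fun x : ℝ => (1 - x) ^ (2*a)) (Ioo (0:ℝ) 1) :=
      ((intervalIntegrable_iff_integrableOn_Ioo_of_le zero_le_one).mp h1)
    refine h3.congr_fun (fun x hx => ?_) measurableSet_Ioo
    rw [hg]
    simp only
    rw [FBM.plusPow_of_pos (by linarith [hx.2] : (0:ℝ) < 1 - x),
      FBM.plusPow_of_nonpos (by linarith [hx.1] : -x ≤ 0), sub_zero,
      FBM.sq_rpow (by linarith [hx.2]) a]
  have hIoi0 : IntegrableOn g (Ioi (0:ℝ)) := by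
    rw [← Ioo_union_Ici_eq_Ioi (zero_lt_one : (0:ℝ) < 1), integrableOn_union]
    exact ⟨hIoo, hIci1⟩
  have hneg : ∀ s : ℝ, g (-s) = (plusPow (1 + s) a - plusPow s a) ^ 2 := by
    intro s
    rw [hg]
    simp only [sub_neg_eq_add, neg_neg]
  have hIcc : IntegrableOn (fun s : ℝ => g (-s)) (Icc (0:ℝ) 1) := by
    have hB : IntegrableOn (fun s : ℝ => 4 + 4 * s ^ a + s ^ (2*a)) (Icc (0:ℝ) 1) := by
      have i1 : IntegrableOn (fun s : ℝ => s ^ a) (Icc (0:ℝ) 1) :=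
        (intervalIntegrable_iff_integrableOn_Icc_of_le zero_le_one).mp
          (intervalIntegral.intervalIntegrable_rpow' (by linarith))
      have i2 : IntegrableOn (fun s : ℝ => s ^ (2*a)) (Icc (0:ℝ) 1) :=
        (intervalIntegrable_iff_integrableOn_Icc_of_le zero_le_one).mp
          (intervalIntegral.intervalIntegrable_rpow' (by linarith))
      have i0 : IntegrableOn (fun _ : ℝ => (4:ℝ)) (Icc (0:ℝ) 1) :=
        (integrableOn_const_iff).mpr (Or.inr measure_Icc_lt_top)
      exact (i0.add (i1.const_mul 4)).add i2
    refine Integrable.mono' hB ((meas.comp measurable_neg).aestronglyMeasurable) ?_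
    refine (ae_restrict_iff' measurableSet_Icc).mpr (ae_of_all _ (fun s hs => ?_))
    obtain ⟨hs0, hs1⟩ := hs
    rw [hneg, Real.norm_eq_abs, abs_of_nonneg (sq_nonneg _)]
    have hsa : 0 ≤ s ^ a := Real.rpow_nonneg hs0 _
    have hsq : (s ^ a) ^ 2 = s ^ (2*a) := FBM.sq_rpow hs0 a
    rcases eq_or_lt_of_le hs0 with rfl | hs0'
    · have h10 : plusPow (1 + (0:ℝ)) a = 1 := by
        rw [show (1:ℝ) + 0 = 1 by norm_num, FBM.plusPow_of_pos one_pos, Real.one_rpow]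
      rw [h10, FBM.plusPow_of_nonpos le_rfl a]
      nlinarith [Real.rpow_nonneg (le_refl (0:ℝ)) (2*a), Real.rpow_nonneg (le_refl (0:ℝ)) a]
    · rw [FBM.plusPow_of_pos (by linarith) a, FBM.plusPow_of_pos hs0' a]
      have hub : (1 + s) ^ a ≤ 2 := by
        calc (1 + s) ^ a ≤ (1 + s) ^ (1:ℝ) :=
              Real.rpow_le_rpow_of_exponent_le (by linarith) (by linarith)
          _ = 1 + s := Real.rpow_one _
          _ ≤ 2 := by linarith
      have hlb : 0 ≤ (1 + s) ^ a := Real.rpow_nonneg (by linarith) _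
      nlinarith
  have hIoi1 : IntegrableOn (fun s : ℝ => g (-s)) (Ioi (1:ℝ)) := by
    have hB : IntegrableOn (fun s : ℝ => a^2 * s ^ (2*a - 2)) (Ioi (1:ℝ)) :=
      (integrableOn_Ioi_rpow_of_lt (by linarith) zero_lt_one).const_mul _
    refine Integrable.mono' hB ((meas.comp measurable_neg).aestronglyMeasurable) ?_
    refine (ae_restrict_iff' measurableSet_Ioi).mpr (ae_of_all _ (fun s hs => ?_))
    have hs1 : (1:ℝ) ≤ s := le_of_lt hs
    have hs0 : (0:ℝ) < s := lt_of_lt_of_le one_pos hs1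
    rw [hneg, Real.norm_eq_abs, abs_of_nonneg (sq_nonneg _),
      FBM.plusPow_of_pos (by linarith) a, FBM.plusPow_of_pos hs0 a]
    have htb := FBM.tail_bound ha₁ ha₂ hs1
    have habs := abs_le.mp htb
    have hsq : ((1 + s) ^ a - s ^ a) ^ 2 ≤ (|a| * s ^ (a-1)) ^ 2 :=
      sq_le_sq' (by linarith [habs.1]) habs.2
    calc ((1 + s) ^ a - s ^ a) ^ 2 ≤ (|a| * s ^ (a-1)) ^ 2 := hsq
      _ = a^2 * (s ^ (a-1)) ^ 2 := by rw [mul_pow, sq_abs]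
      _ = a^2 * s ^ (2*a - 2) := by
          rw [FBM.sq_rpow hs0.le (a-1)]
          ring_nf
  have hIci0 : IntegrableOn (fun s : ℝ => g (-s)) (Ici (0:ℝ)) := by
    rw [← Icc_union_Ioi_eq_Ici (zero_le_one : (0:ℝ) ≤ 1), integrableOn_union]
    exact ⟨hIcc, hIoi1⟩
  have hIic : IntegrableOn g (Iic (0:ℝ)) := FBM.integrableOn_Iic_comp_neg hIci0
  rw [← integrableOn_univ, ← Iic_union_Ioi (a := (0:ℝ)), integrableOn_union]
  exact ⟨hIic, hIoi0⟩

lemma FBM.psi_sq_integral {H : ℝ} (hH : H ∈ Set.Ioo (0:ℝ) 1) :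
    ∫ x : ℝ, (plusPow (1 - x) (H - 1/2) - plusPow (-x) (H - 1/2)) ^ 2 = cH H := by
  obtain ⟨hH0, hH1⟩ := hH
  obtain ⟨a, ha⟩ : ∃ a : ℝ, a = H - 1/2 := ⟨_, rfl⟩
  rw [show H - 1/2 = a from ha.symm]
  have ha₁ : -(1/2 : ℝ) < a := by rw [ha]; linarith
  have ha₂ : a < 1/2 := by rw [ha]; linarith
  set g : ℝ → ℝ := fun x => (plusPow (1 - x) a - plusPow (-x) a) ^ 2 with hg
  have intg : Integrable g := FBM.psi_sq_integrable ha₁ ha₂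
  rw [← intervalIntegral.integral_Iic_add_Ioi (b := (0:ℝ)) intg.integrableOn intg.integrableOn]
  have hleft : (∫ x in Iic (0:ℝ), g x) =
      ∫ s in Ioi (0:ℝ), ((1 + s) ^ a - s ^ a) ^ 2 := by
    rw [show Iic (0:ℝ) = Iic (-(0:ℝ)) by norm_num, ← integral_comp_neg_Ioi]
    refine setIntegral_congr_fun measurableSet_Ioi (fun s hs => ?_)
    have hs0 : (0:ℝ) < s := hs
    rw [hg]
    simp only [sub_neg_eq_add, neg_neg]
    rw [FBM.plusPow_of_pos (by linarith) a, FBM.plusPow_of_pos hs0 a]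
  have hright : (∫ x in Ioi (0:ℝ), g x) = 1 / (2 * H) := by
    rw [← Ioo_union_Ici_eq_Ioi (zero_lt_one : (0:ℝ) < 1),
      setIntegral_union (by rw [Set.disjoint_left]; rintro x ⟨_, h1⟩ h2; exact absurd h1 (not_lt.mpr h2))
        measurableSet_Ici intg.integrableOn intg.integrableOn]
    have h1 : (∫ x in Ici (1:ℝ), g x) = 0 := by
      rw [setIntegral_congr_fun measurableSet_Ici
        (fun x hx => (FBM.psi_eqOn_Ici a x hx : g x = 0))]
      simp
    have h2 : (∫ x in Ioo (0:ℝ) 1, g x) = 1 / (2 * H) := by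
      rw [setIntegral_congr_fun measurableSet_Ioo (fun x hx => ?_), ← integral_Ioc_eq_integral_Ioo,
        ← intervalIntegral.integral_of_le zero_le_one]
      rotate_left
      · exact (fun x => x ^ (2*a)) ∘ (fun x => 1 - x)
      · rw [hg]
        simp only [Function.comp_apply]
        rw [FBM.plusPow_of_pos (by linarith [hx.2] : (0:ℝ) < 1 - x),
          FBM.plusPow_of_nonpos (by linarith [hx.1] : -x ≤ 0), sub_zero,
          FBM.sq_rpow (by linarith [hx.2]) a]
      rw [show (∫ x in (0:ℝ)..1, ((fun x => x ^ (2*a)) ∘ (fun x => 1 - x)) x)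
          = ∫ x in (0:ℝ)..1, (fun y : ℝ => y ^ (2*a)) (1 - x) from rfl]
      rw [intervalIntegral.integral_comp_sub_left (fun y : ℝ => y ^ (2*a)) 1]
      norm_num
      rw [integral_rpow (Or.inl (by linarith))]
      rw [Real.one_rpow, Real.zero_rpow (by rw [ha]; intro h; absurd h; intro hh; nlinarith)]
      rw [ha]
      ring_nf
    rw [h1, h2, add_zero]
  rw [hleft, hright, cH, ha, add_comm]

/-- The squared `L²`-norm of the increment kernel `φ_t − φ_s` is `c_𝐇 (t−s)^{2𝐇}`, i.e. it
depends only on `t − s` (stationarity of increments). -/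
theorem fracKernel_increment_norm
    (H : ℝ) (hH : H ∈ Set.Ioo (0 : ℝ) 1) (t s : ℝ) (hs : 0 ≤ s) (hst : s ≤ t) :
    ∫ x : ℝ, (fracKernel H t x - fracKernel H s x) ^ 2 = cH H * (t - s) ^ (2 * H) := by
  obtain ⟨hH0, hH1⟩ := hH
  rcases eq_or_lt_of_le hst with rfl | hlt
  · simp [Real.zero_rpow (by positivity : (2*H) ≠ 0)]
  · obtain ⟨a, ha⟩ : ∃ a : ℝ, a = H - 1/2 := ⟨_, rfl⟩
    obtain ⟨δ, hδdef⟩ : ∃ δ : ℝ, δ = t - s := ⟨_, rfl⟩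
    have hδ : 0 < δ := by rw [hδdef]; linarith
    rw [show t - s = δ from hδdef.symm]
    have key : ∀ x : ℝ, fracKernel H t x - fracKernel H s x
        = plusPow (t - x) a - plusPow (s - x) a := by
      intro x; rw [fracKernel, fracKernel, ha]; ring
    have hψa : (∫ x : ℝ, (plusPow (1 - x) a - plusPow (-x) a) ^ 2) = cH H := by
      have h := FBM.psi_sq_integral (H := H) ⟨hH0, hH1⟩
      rw [show H - 1/2 = a from ha.symm] at h
      exact h
    calc (∫ x : ℝ, (fracKernel H t x - fracKernel H s x) ^ 2)
        = ∫ x : ℝ, (plusPow (t - x) a - plusPow (s - x) a) ^ 2 := by simp_rw [key]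
      _ = ∫ x : ℝ, (plusPow (t - (s + x)) a - plusPow (s - (s + x)) a) ^ 2 :=
          (integral_add_left_eq_self
            (fun x => (plusPow (t - x) a - plusPow (s - x) a) ^ 2) s).symm
      _ = |δ| * ∫ x : ℝ, (plusPow (t - (s + δ * x)) a - plusPow (s - (s + δ * x)) a) ^ 2 := by
          rw [show (∫ x : ℝ, (plusPow (t - (s + δ * x)) a - plusPow (s - (s + δ * x)) a) ^ 2)
              = |δ⁻¹| * ∫ x : ℝ, (plusPow (t - (s + x)) a - plusPow (s - (s + x)) a) ^ 2 from
            Measure.integral_comp_mul_left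
              (fun x => (plusPow (t - (s + x)) a - plusPow (s - (s + x)) a) ^ 2) δ]
          rw [abs_inv, ← mul_assoc, mul_inv_cancel₀ (abs_ne_zero.mpr hδ.ne'), one_mul]
      _ = |δ| * ((δ ^ a) ^ 2 * ∫ x : ℝ, (plusPow (1 - x) a - plusPow (-x) a) ^ 2) := by
          congr 1
          simp_rw [show ∀ u : ℝ, t - (s + δ * u) = δ * (1 - u) from fun u => by rw [hδdef]; ring,
            show ∀ u : ℝ, s - (s + δ * u) = δ * (-u) from fun u => by ring,
            FBM.plusPow_mul hδ, ← mul_sub, mul_pow]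
          exact integral_const_mul _ _
      _ = cH H * δ ^ (2 * H) := by
          rw [hψa, abs_of_pos hδ, FBM.sq_rpow hδ.le a,
            show δ * (δ ^ (2*a) * cH H) = (δ ^ (1:ℝ) * δ ^ (2*a)) * cH H by
              rw [Real.rpow_one]; ring,
            ← Real.rpow_add hδ, show (1:ℝ) + 2*a = 2*H by rw [ha]; ring]
          ring
end

section
/- Let ν be a Borel probability measure on (0,∞) with Gamma-ratio moments ∫_0^∞ τ^k dν(τ) = (1/K) ∏_{i=1}^m Γ(b_i + β_i(k+1)) / ∏_{j=1}^p Γ(a_j + α_j(k+1)) for all k ∈ ℕ, where β_i > 0, b_i + β_i > 0, α_j > 0, a_j + α_j > 0, K = ∏_{i=1}^m Γ(b_i + β_i)/∏_{j=1}^p Γ(a_j + α_j), and ∑_{i=1}^m β_i − ∑_{j=1}^p α_j ∈ (0,1). Let γ be the standard Gaussian measure on ℝ, 𝐇 ∈ (0,1), t, s ≥ 0 and λ ∈ ℝ. Then ∫_0^∞ ∫_ℝ exp(i λ √τ |t−s|^𝐇 x) dγ(x) dν(τ) = (1/K) ∑_{k=0}^∞ (∏_{i=1}^m Γ(b_i +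 β_i + β_i k)/∏_{j=1}^p Γ(a_j + α_j + α_j k)) (−λ² |t−s|^{2𝐇}/2)^k / k!; i.e., the characteristic function of the increment X_t^{𝐇,A,B} − X_s^{𝐇,A,B} of the generalized Fox-H process equals (1/K) times the generalized Wright function evaluated at −λ²|t−s|^{2𝐇}/2. -/
open MeasureTheory ProbabilityTheory

section FoxHAux

open Real
open scoped NNReal ENNReal

/-- fractional case upper bound -/
lemma GammaFracU {x δ : ℝ} (hx : 0 < x) (h0 : 0 ≤ δ) (h1 : δ ≤ 1) :
    Gamma (x + δ) ≤ Gamma x * x ^ δ := by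
  rcases eq_or_lt_of_le h0 with rfl | h0'
  · simp
  rcases eq_or_lt_of_le h1 with rfl | h1'
  · rw [Gamma_add_one hx.ne', rpow_one, mul_comm]
  have key := Real.Gamma_mul_add_mul_le_rpow_Gamma_mul_rpow_Gamma hx
    (by linarith : (0:ℝ) < x + 1) (by linarith : 0 < 1 - δ) h0' (by ring)
  have harg : (1 - δ) * x + δ * (x + 1) = x + δ := by ring
  rw [harg, Gamma_add_one hx.ne'] at key
  calc Gamma (x + δ) ≤ Gamma x ^ (1 - δ) * (x * Gamma x) ^ δ := key
    _ = Gamma x * x ^ δ := by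
        rw [mul_rpow hx.le (Gamma_pos_of_pos hx).le, ← mul_assoc,
          mul_comm (Gamma x ^ (1-δ)), mul_assoc, ← rpow_add (Gamma_pos_of_pos hx)]
        ring_nf
        rw [rpow_one]

/-- fractional case lower bound -/
lemma GammaFracL {x δ : ℝ} (hx : 0 < x) (h0 : 0 ≤ δ) (h1 : δ ≤ 1) :
    Gamma x * x ^ δ * (x / (x + δ)) ≤ Gamma (x + δ) := by
  have hxδ : 0 < x + δ := by linarith
  rcases eq_or_lt_of_le h0 with rfl | h0'
  · simp [div_self hx.ne', Gamma_pos_of_pos hx |>.le]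
  rcases eq_or_lt_of_le h1 with rfl | h1'
  · rw [Gamma_add_one hx.ne', rpow_one]
    have h2 : x / (x + 1) ≤ 1 := by rw [div_le_one hxδ]; linarith
    calc Gamma x * x * (x / (x + 1)) ≤ Gamma x * x * 1 := by
          gcongr
      _ = x * Gamma x := by ring
  have key := Real.Gamma_mul_add_mul_le_rpow_Gamma_mul_rpow_Gamma hxδ
    (by linarith : (0:ℝ) < x + δ + 1) h0' (by linarith : 0 < 1 - δ) (by ring)
  have harg : δ * (x + δ) + (1 - δ) * (x + δ + 1) = x + 1 := by ring
  rw [harg, Gamma_add_one hxδ.ne', Gamma_add_one hx.ne'] at key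
  have hG := Gamma_pos_of_pos hxδ
  have key2 : x * Gamma x ≤ Gamma (x + δ) * (x + δ) ^ (1 - δ) := by
    calc x * Gamma x ≤ Gamma (x+δ) ^ δ * ((x+δ) * Gamma (x+δ)) ^ (1-δ) := key
      _ = Gamma (x + δ) * (x + δ) ^ (1 - δ) := by
          rw [mul_rpow hxδ.le hG.le, ← mul_assoc, mul_comm (Gamma (x+δ) ^ δ), mul_assoc,
            mul_comm (Gamma (x+δ) ^ δ), ← rpow_add hG]
          ring_nf
          rw [rpow_one]
  -- from key2: Gamma(x+δ) ≥ x Γx / (x+δ)^{1-δ}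
  have hpow : (0:ℝ) < (x + δ) ^ (1 - δ) := rpow_pos_of_pos hxδ _
  rw [← div_le_iff₀ hpow] at key2
  refine le_trans ?_ key2
  rw [le_div_iff₀ hpow]
  have hsum : (x+δ) ^ δ * (x+δ) ^ (1-δ) = x + δ := by
    rw [← rpow_add hxδ]; norm_num
  have hxp : x ^ δ ≤ (x+δ) ^ δ := rpow_le_rpow hx.le (by linarith) h0
  calc Gamma x * x ^ δ * (x / (x + δ)) * (x + δ) ^ (1 - δ)
      ≤ Gamma x * (x+δ) ^ δ * (x / (x + δ)) * (x + δ) ^ (1 - δ) := by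
        gcongr
    _ = x * Gamma x := by
        have hre : Gamma x * (x+δ) ^ δ * (x / (x + δ)) * (x + δ) ^ (1 - δ)
            = Gamma x * x * ((x+δ) ^ δ * (x+δ) ^ (1-δ)) / (x + δ) := by ring
        rw [hre, hsum, mul_div_assoc, div_self hxδ.ne']; ring

lemma GammaAuxBound : ∀ (n : ℕ) (δ x : ℝ), 0 < x → 0 ≤ δ → δ ≤ n + 1 →
    Gamma (x + δ) ≤ Gamma x * (x + δ) ^ δ ∧
    Gamma x * x ^ δ * (x / (x + δ)) ≤ Gamma (x + δ) := by
  intro n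
  induction n with
  | zero =>
    intro δ x hx h0 h1
    norm_num at h1
    refine ⟨(GammaFracU hx h0 h1).trans ?_, GammaFracL hx h0 h1⟩
    exact mul_le_mul_of_nonneg_left (rpow_le_rpow hx.le (by linarith) h0)
      (Gamma_pos_of_pos hx).le
  | succ n ih =>
    intro δ x hx h0 h1
    by_cases hd : δ ≤ n + 1
    · exact ih δ x hx h0 hd
    · push_neg at hd
      have hn1 : (1:ℝ) ≤ (n:ℝ) + 1 := by linarith [Nat.cast_nonneg (α := ℝ) n]
      have h0' : 0 ≤ δ - 1 := by linarith
      have h1' : δ - 1 ≤ (n:ℝ) + 1 := by push_cast at h1; linarith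
      obtain ⟨IHU, IHL⟩ := ih (δ - 1) x hx h0' h1'
      have hxd1 : 0 < x + (δ - 1) := by linarith
      have hxd : 0 < x + δ := by linarith
      have hrec : Gamma (x + δ) = (x + (δ - 1)) * Gamma (x + (δ - 1)) := by
        have h := Gamma_add_one hxd1.ne'
        rw [← h]; ring_nf
      constructor
      · rw [hrec]
        calc (x + (δ - 1)) * Gamma (x + (δ - 1))
            ≤ (x + (δ - 1)) * (Gamma x * (x + (δ - 1)) ^ (δ - 1)) := by
              exact mul_le_mul_of_nonneg_left IHU hxd1.le
          _ = Gamma x * (x + (δ - 1)) ^ δ := by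
              have h2 : (x + (δ - 1)) ^ δ = (x + (δ - 1)) ^ (δ - 1) * (x + (δ - 1)) := by
                rw [← rpow_add_one hxd1.ne' (δ - 1)]; ring_nf
              rw [h2]; ring
          _ ≤ Gamma x * (x + δ) ^ δ := by
              exact mul_le_mul_of_nonneg_left
                (rpow_le_rpow hxd1.le (by linarith) (by linarith)) (Gamma_pos_of_pos hx).le
      · rw [hrec]
        have step1 : Gamma x * x ^ δ * (x / (x + δ)) ≤ Gamma x * x ^ (δ - 1) * x := by
          have hxx : x ^ δ = x ^ (δ - 1) * x := by
            rw [← rpow_add_one hx.ne' (δ - 1)]; ring_nf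
          rw [hxx]
          calc Gamma x * (x ^ (δ - 1) * x) * (x / (x + δ))
              ≤ Gamma x * (x ^ (δ - 1) * x) * 1 := by
                gcongr
                rw [div_le_one hxd]; linarith
            _ = Gamma x * x ^ (δ - 1) * x := by ring
        refine step1.trans ?_
        have step2 := mul_le_mul_of_nonneg_left IHL hxd1.le
        refine le_trans (le_of_eq ?_) step2
        field_simp

lemma Gamma_ratio_upper {x δ : ℝ} (hx : 0 < x) (h0 : 0 ≤ δ) :
    Gamma (x + δ) ≤ Gamma x * (x + δ) ^ δ :=
  (GammaAuxBound ⌈δ⌉₊ δ x hx h0 (by have := Nat.le_ceil δ; linarith)).1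

lemma Gamma_ratio_lower {x δ : ℝ} (hx : 0 < x) (h0 : 0 ≤ δ) :
    Gamma x * x ^ δ * (x / (x + δ)) ≤ Gamma (x + δ) :=
  (GammaAuxBound ⌈δ⌉₊ δ x hx h0 (by have := Nat.le_ceil δ; linarith)).2

lemma rpow_sum_helper {x : ℝ} (hx : 0 < x) {ι : Type*} (s : Finset ι) (f : ι → ℝ) :
    x ^ (∑ i ∈ s, f i) = ∏ i ∈ s, x ^ f i := by
  simp [Real.rpow_def_of_pos hx, Finset.mul_sum, Real.exp_sum]

open Filter in
set_option maxHeartbeats 1000000 in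
lemma summable_wright {m p : ℕ} {b β : Fin m → ℝ} {a α : Fin p → ℝ}
    (hβ : ∀ i, 0 < β i) (hbβ : ∀ i, 0 < b i + β i)
    (hα : ∀ j, 0 < α j) (haα : ∀ j, 0 < a j + α j)
    (hastar : (∑ i, β i) - (∑ j, α j) ∈ Set.Ioo (0:ℝ) 1)
    {c : ℝ} (hc : 0 ≤ c) :
    Summable (fun k : ℕ =>
      (∏ i, Gamma (b i + β i * (k+1))) / (∏ j, Gamma (a j + α j * (k+1)))
        * c ^ k / (Nat.factorial k : ℝ)) := by
  rcases hc.eq_or_lt with rfl | hc'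
  · apply summable_of_ne_finset_zero (s := {0})
    intro k hk
    simp only [Finset.mem_singleton] at hk
    simp [zero_pow hk]
  have hargb : ∀ (i : Fin m) (r : ℝ), 0 ≤ r → 0 < b i + β i * (r+1) := by
    intro i r hr
    nlinarith [hbβ i, hβ i]
  have harga : ∀ (j : Fin p) (r : ℝ), 0 ≤ r → 0 < a j + α j * (r+1) := by
    intro j r hr
    nlinarith [haα j, hα j]
  set σ := (∑ i, β i) - (∑ j, α j) with hσ
  have hSb : 0 ≤ ∑ i, β i := Finset.sum_nonneg fun i _ => (hβ i).le
  set f : ℕ → ℝ := fun k =>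
      (∏ i, Gamma (b i + β i * (k+1))) / (∏ j, Gamma (a j + α j * (k+1)))
        * c ^ k / (Nat.factorial k : ℝ) with hf
  have hP : ∀ k : ℕ, 0 < ∏ i, Gamma (b i + β i * ((k:ℝ)+1)) :=
    fun k => Finset.prod_pos fun i _ => Gamma_pos_of_pos (hargb i k (by positivity))
  have hQ : ∀ k : ℕ, 0 < ∏ j, Gamma (a j + α j * ((k:ℝ)+1)) :=
    fun k => Finset.prod_pos fun j _ => Gamma_pos_of_pos (harga j k (by positivity))
  have hfpos : ∀ k, 0 < f k := by
    intro k
    have h1 := hP k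
    have h2 := hQ k
    have h3 : (0:ℝ) < (Nat.factorial k : ℝ) := by positivity
    simp only [hf]
    positivity
  set CU := ∏ i, (b i + 2 * β i) ^ (β i) with hCU
  set CV := ∏ j, ((min (a j + α j) (α j)) ^ (α j) / 2) with hCV
  have hCUpos : 0 < CU := Finset.prod_pos fun i _ =>
    rpow_pos_of_pos (by nlinarith [hβ i, hbβ i]) _
  have hCVpos : 0 < CV := Finset.prod_pos fun j _ => by
    have : 0 < min (a j + α j) (α j) := lt_min (haα j) (hα j)
    positivity
  set D := c * (CU * 2 ^ (∑ i, β i)) / CV with hD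
  have key : ∀ k : ℕ, 1 ≤ k → f (k+1) ≤ f k * (D * ((k:ℝ)+1) ^ (σ - 1)) := by
    intro k hk
    have hk1 : (0:ℝ) < (k:ℝ) + 1 := by positivity
    have hk2 : (0:ℝ) < (k:ℝ) + 2 := by positivity
    set W := CU * ((k:ℝ)+2) ^ (∑ i, β i) with hW
    set Z := CV * ((k:ℝ)+1) ^ (∑ j, α j) with hZ
    have hWpos : 0 < W := by positivity
    have hZpos : 0 < Z := by positivity
    -- numerator bound
    have hnum : (∏ i, Gamma (b i + β i * ((k:ℝ)+1+1)))
        ≤ (∏ i, Gamma (b i + β i * ((k:ℝ)+1))) * W := by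
      have hterm : ∀ i : Fin m, Gamma (b i + β i * ((k:ℝ)+1+1))
          ≤ Gamma (b i + β i * ((k:ℝ)+1)) * ((b i + 2*β i) ^ (β i) * ((k:ℝ)+2) ^ (β i)) := by
        intro i
        have hx := hargb i k (by positivity)
        have harg : b i + β i * ((k:ℝ)+1+1) = (b i + β i * ((k:ℝ)+1)) + β i := by ring
        have hub := Gamma_ratio_upper hx (hβ i).le
        rw [← harg] at hub
        refine hub.trans ?_
        refine mul_le_mul_of_nonneg_left ?_ (Gamma_pos_of_pos hx).le
        rw [← mul_rpow (by nlinarith [hβ i, hbβ i]) hk2.le]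
        refine rpow_le_rpow (by nlinarith [hβ i, hbβ i, hk1]) ?_ (hβ i).le
        nlinarith [hβ i, hbβ i, Nat.cast_nonneg (α := ℝ) k]
      calc ∏ i, Gamma (b i + β i * ((k:ℝ)+1+1))
          ≤ ∏ i, (Gamma (b i + β i * ((k:ℝ)+1)) * ((b i + 2*β i) ^ (β i) * ((k:ℝ)+2) ^ (β i))) :=
            Finset.prod_le_prod (fun i _ => (Gamma_pos_of_pos (hargb i ((k:ℝ)+1) (by positivity))).le) (fun i _ => hterm i)
        _ = (∏ i, Gamma (b i + β i * ((k:ℝ)+1))) * W := by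
            rw [Finset.prod_mul_distrib, Finset.prod_mul_distrib,
              ← rpow_sum_helper hk2, hW, hCU]
    -- denominator bound
    have hden : (∏ j, Gamma (a j + α j * ((k:ℝ)+1))) * Z
        ≤ ∏ j, Gamma (a j + α j * ((k:ℝ)+1+1)) := by
      have hterm : ∀ j : Fin p,
          Gamma (a j + α j * ((k:ℝ)+1)) * ((min (a j + α j) (α j)) ^ (α j) / 2 * ((k:ℝ)+1) ^ (α j))
          ≤ Gamma (a j + α j * ((k:ℝ)+1+1)) := by
        intro j
        have hy := harga j k (by positivity)
        set y := a j + α j * ((k:ℝ)+1) with hy'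
        have harg : a j + α j * ((k:ℝ)+1+1) = y + α j := by rw [hy']; ring
        rw [harg]
        have hlb := Gamma_ratio_lower hy (hα j).le
        refine le_trans ?_ hlb
        have hG := Gamma_pos_of_pos hy
        set ε := min (a j + α j) (α j) with hε
        have hεpos : 0 < ε := lt_min (haα j) (hα j)
        have hεle : ε * ((k:ℝ)+1) ≤ y := by
          rw [hy']
          have h1 : ε ≤ a j + α j := min_le_left _ _
          have h2 : ε ≤ α j := min_le_right _ _
          nlinarith [Nat.cast_nonneg (α := ℝ) k]
        have hyk : ε ^ (α j) * ((k:ℝ)+1) ^ (α j) ≤ y ^ (α j) := by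
          rw [← mul_rpow hεpos.le hk1.le]
          exact rpow_le_rpow (by positivity) hεle (hα j).le
        have hhalf : (1:ℝ)/2 ≤ y / (y + α j) := by
          rw [le_div_iff₀ (by linarith [hy, hα j])]
          have hk1' : (1:ℝ) ≤ (k:ℝ) := by exact_mod_cast hk
          have h5 : α j * 1 ≤ α j * (k:ℝ) := mul_le_mul_of_nonneg_left hk1' (hα j).le
          rw [hy']
          linarith [haα j, h5]
        calc Gamma y * (ε ^ (α j) / 2 * ((k:ℝ)+1) ^ (α j))
            = Gamma y * (ε ^ (α j) * ((k:ℝ)+1) ^ (α j)) * (1/2) := by ring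
          _ ≤ Gamma y * y ^ (α j) * (y / (y + α j)) := by
              refine mul_le_mul (mul_le_mul_of_nonneg_left hyk hG.le) hhalf (by norm_num) ?_
              positivity
      calc (∏ j, Gamma (a j + α j * ((k:ℝ)+1))) * Z
          = ∏ j, (Gamma (a j + α j * ((k:ℝ)+1)) * ((min (a j + α j) (α j)) ^ (α j) / 2 * ((k:ℝ)+1) ^ (α j))) := by
            rw [Finset.prod_mul_distrib, Finset.prod_mul_distrib,
              ← rpow_sum_helper hk1, hZ, hCV]
        _ ≤ ∏ j, Gamma (a j + α j * ((k:ℝ)+1+1)) :=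
            Finset.prod_le_prod (fun j _ => by
              have hG := Gamma_pos_of_pos (harga j k (by positivity))
              have h2 : 0 < min (a j + α j) (α j) := lt_min (haα j) (hα j)
              positivity) (fun j _ => hterm j)
    -- combine
    have hratio : f (k+1) ≤ f k * (W * c / (Z * ((k:ℝ)+1))) := by
      have hfk1 : f (k+1) = (∏ i, Gamma (b i + β i * ((k:ℝ)+1+1)))
          / (∏ j, Gamma (a j + α j * ((k:ℝ)+1+1))) * c ^ (k+1) / (Nat.factorial (k+1) : ℝ) := by
        have hcast : ((k+1 : ℕ) : ℝ) = (k:ℝ)+1 := by push_cast; ring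
        simp only [hf, hcast]
      rw [hfk1]
      have hQ' : 0 < ∏ j, Gamma (a j + α j * ((k:ℝ)+1+1)) :=
        Finset.prod_pos fun j _ => Gamma_pos_of_pos (harga j ((k:ℝ)+1) (by positivity))
      have hdiv : (∏ i, Gamma (b i + β i * ((k:ℝ)+1+1)))
          / (∏ j, Gamma (a j + α j * ((k:ℝ)+1+1)))
          ≤ ((∏ i, Gamma (b i + β i * ((k:ℝ)+1))) * W)
            / ((∏ j, Gamma (a j + α j * ((k:ℝ)+1))) * Z) :=
        div_le_div₀ (mul_pos (hP k) hWpos).le hnum (mul_pos (hQ k) hZpos) hden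
      calc (∏ i, Gamma (b i + β i * ((k:ℝ)+1+1)))
          / (∏ j, Gamma (a j + α j * ((k:ℝ)+1+1))) * c ^ (k+1) / (Nat.factorial (k+1) : ℝ)
          ≤ ((∏ i, Gamma (b i + β i * ((k:ℝ)+1))) * W)
            / ((∏ j, Gamma (a j + α j * ((k:ℝ)+1))) * Z) * c ^ (k+1) / (Nat.factorial (k+1) : ℝ) := by
            gcongr
        _ = f k * (W * c / (Z * ((k:ℝ)+1))) := by
            simp only [hf, Nat.factorial_succ]
            have h1 := hP k
            have h2 := hQ k
            have h3 : (0:ℝ) < (Nat.factorial k : ℝ) := by positivity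
            field_simp
            push_cast
            ring
    refine hratio.trans (mul_le_mul_of_nonneg_left ?_ (hfpos k).le)
    -- W * c / (Z * (k+1)) ≤ D * (k+1)^(σ-1)
    have hpowσ : ((k:ℝ)+1) ^ (σ - 1)
        = ((k:ℝ)+1) ^ (∑ i, β i) / (((k:ℝ)+1) ^ (∑ j, α j) * ((k:ℝ)+1)) := by
      rw [show σ - 1 = (∑ i, β i) - ((∑ j, α j) + 1) by rw [hσ]; ring,
        rpow_sub hk1, rpow_add hk1, rpow_one]
    have hWle : W ≤ CU * 2 ^ (∑ i, β i) * ((k:ℝ)+1) ^ (∑ i, β i) := by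
      rw [hW]
      have : ((k:ℝ)+2) ^ (∑ i, β i) ≤ (2*((k:ℝ)+1)) ^ (∑ i, β i) :=
        rpow_le_rpow hk2.le (by linarith) hSb
      rw [mul_rpow (by norm_num) hk1.le] at this
      calc CU * ((k:ℝ)+2) ^ (∑ i, β i)
          ≤ CU * (2 ^ (∑ i, β i) * ((k:ℝ)+1) ^ (∑ i, β i)) :=
            mul_le_mul_of_nonneg_left this hCUpos.le
        _ = CU * 2 ^ (∑ i, β i) * ((k:ℝ)+1) ^ (∑ i, β i) := by ring
    calc W * c / (Z * ((k:ℝ)+1))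
        ≤ (CU * 2 ^ (∑ i, β i) * ((k:ℝ)+1) ^ (∑ i, β i)) * c / (Z * ((k:ℝ)+1)) := by
          gcongr
    _ = D * ((k:ℝ)+1) ^ (σ - 1) := by
          rw [hpowσ, hD, hZ]
          have h4 : (0:ℝ) < ((k:ℝ)+1) ^ (∑ j, α j) := rpow_pos_of_pos hk1 _
          field_simp
  -- tendsto part
  have hσ1 : σ - 1 < 0 := by have := hastar.2; simp only [hσ]; linarith
  have hlim : Tendsto (fun k : ℕ => D * ((k:ℝ)+1) ^ (σ - 1)) atTop (nhds 0) := by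
    have h1 : Tendsto (fun x : ℝ => x ^ (σ - 1)) atTop (nhds 0) := by
      have h := tendsto_rpow_neg_atTop (y := 1 - σ) (by linarith)
      simpa [show -(1-σ) = σ - 1 by ring] using h
    have h2 : Tendsto (fun k : ℕ => (k:ℝ)+1) atTop atTop :=
      tendsto_atTop_add_const_right _ _ tendsto_natCast_atTop_atTop
    have h3 := (h1.comp h2).const_mul D
    simpa using h3
  have hev : ∀ᶠ k : ℕ in atTop, D * ((k:ℝ)+1) ^ (σ - 1) ≤ 1/2 :=
    (hlim.eventually_lt_const (by norm_num : (0:ℝ) < 1/2)).mono fun k hk => hk.le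
  apply summable_of_ratio_norm_eventually_le (r := 1/2) (by norm_num)
  filter_upwards [hev, eventually_ge_atTop 1] with k h1 h2
  have hkey := key k h2
  rw [Real.norm_of_nonneg (hfpos (k+1)).le, Real.norm_of_nonneg (hfpos k).le]
  calc f (k+1) ≤ f k * (D * ((k:ℝ)+1) ^ (σ - 1)) := hkey
    _ ≤ f k * (1/2) := mul_le_mul_of_nonneg_left h1 (hfpos k).le
    _ = 1/2 * f k := by ring

open MeasureTheory ProbabilityTheory Complex in
lemma gauss_cf (u : ℝ) :
    ∫ x, Complex.exp (Complex.I * ((u * x : ℝ) : ℂ)) ∂(gaussianReal 0 1)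
      = ((Real.exp (-(u^2/2)) : ℝ) : ℂ) := by
  rw [gaussianReal_of_var_ne_zero 0 one_ne_zero]
  have hpdf : gaussianPDF 0 1 = fun x => ((Real.toNNReal (gaussianPDFReal 0 1 x) : ℝ≥0) : ℝ≥0∞) :=
    rfl
  rw [hpdf, integral_withDensity_eq_integral_smul
    ((measurable_gaussianPDFReal 0 1).real_toNNReal)]
  have hint : ∀ x : ℝ, (Real.toNNReal (gaussianPDFReal 0 1 x))
      • Complex.exp (Complex.I * ((u * x : ℝ) : ℂ))
      = ((Real.sqrt (2 * π) : ℂ))⁻¹ * Complex.exp ((-(1/2) : ℂ) * x^2 + ((u : ℂ) * I) * x + 0) := by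
    intro x
    have hnn := gaussianPDFReal_nonneg 0 1 x
    rw [NNReal.smul_def, Real.coe_toNNReal _ hnn, Complex.real_smul]
    have hpdfx : gaussianPDFReal 0 1 x = (Real.sqrt (2 * π))⁻¹ * Real.exp (-x^2/2) := by
      rw [gaussianPDFReal]
      norm_num
    rw [hpdfx]
    push_cast
    rw [mul_assoc, ← Complex.exp_add]
    congr 1
    ring
  rw [MeasureTheory.integral_congr_ae (Filter.Eventually.of_forall hint),
    MeasureTheory.integral_const_mul, integral_cexp_quadratic (by norm_num) _ _]
  have h1 : ((π : ℂ) / -(-(1/2))) = ((2 * π : ℝ) : ℂ) := by push_cast; ring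
  have h2 : ((0 : ℂ) - ((u : ℂ) * I)^2 / (4 * (-(1/2)))) = ((-(u^2/2) : ℝ) : ℂ) := by
    have : ((u:ℂ) * I)^2 = -(u:ℂ)^2 := by
      rw [mul_pow, Complex.I_sq]; ring
    rw [this]; push_cast; ring
  have h3 : ((1:ℂ)/2) = (((1/2 : ℝ)) : ℂ) := by norm_num
  rw [h1, h2, h3, ← Complex.ofReal_cpow (by positivity), ← Real.sqrt_eq_rpow,
    ← Complex.ofReal_exp, ← mul_assoc,
    inv_mul_cancel₀ (Complex.ofReal_ne_zero.mpr (by positivity)), one_mul]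

end FoxHAux

/-- The characteristic function of the increment `X_t^{𝐇,A,B} − X_s^{𝐇,A,B}` of the
generalized Fox-H process (realized as `√Y |t−s|^𝐇 G` with `Y ~ ν` having Gamma-ratio
moments, independent of the standard Gaussian `G`) equals `(1/K)` times the generalized
Wright function evaluated at `−λ²|t−s|^{2𝐇}/2`. -/
theorem generalized_FoxH_increment_characteristic_function
    (m p : ℕ) (b β : Fin m → ℝ) (a α : Fin p → ℝ)
    (hβ : ∀ i, 0 < β i) (hbβ : ∀ i, 0 < b i + β i)
    (hα : ∀ j, 0 < α j) (haα : ∀ j, 0 < a j + α j)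
    (hastar : (∑ i, β i) - (∑ j, α j) ∈ Set.Ioo (0 : ℝ) 1)
    (K : ℝ) (hK : K = (∏ i, Real.Gamma (b i + β i)) / (∏ j, Real.Gamma (a j + α j)))
    (ν : Measure ℝ) [IsProbabilityMeasure ν] (hsupp : ν (Set.Iic 0) = 0)
    (hint : ∀ k : ℕ, Integrable (fun τ : ℝ => τ ^ k) ν)
    (hmom : ∀ k : ℕ, ∫ τ, τ ^ k ∂ν
      = (1 / K) * (∏ i, Real.Gamma (b i + β i * (k + 1)))
          / (∏ j, Real.Gamma (a j + α j * (k + 1))))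
    (H : ℝ) (hH : H ∈ Set.Ioo (0 : ℝ) 1) (t s lam : ℝ) (ht : 0 ≤ t) (hs : 0 ≤ s) :
    ∫ τ, (∫ x, Complex.exp
          (Complex.I * ((lam * Real.sqrt τ * |t - s| ^ H * x : ℝ) : ℂ))
        ∂(gaussianReal 0 1)) ∂ν
      = ((((1 : ℝ) / K) * ∑' k : ℕ,
          ((∏ i, Real.Gamma (b i + β i + β i * k)) / (∏ j, Real.Gamma (a j + α j + α j * k)))
            * (-(lam ^ 2) * |t - s| ^ (2 * H) / 2) ^ k / (Nat.factorial k : ℝ) : ℝ) : ℂ) := by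
  set c : ℝ := lam^2 * |t - s| ^ (2*H) / 2 with hc
  have hc0 : 0 ≤ c := by positivity
  have hae : ∀ᵐ τ ∂ν, 0 < τ := by
    rw [ae_iff]
    have hset : {τ : ℝ | ¬ 0 < τ} = Set.Iic 0 := by ext τ; simp [not_lt]
    rw [hset]; exact hsupp
  -- inner Gaussian integral
  have habs : ∀ τ : ℝ, 0 ≤ τ → (lam * Real.sqrt τ * |t - s| ^ H)^2/2 = c * τ := by
    intro τ hτ
    rw [hc, mul_pow, mul_pow, Real.sq_sqrt hτ, ← Real.rpow_natCast (|t - s| ^ H) 2,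
      ← Real.rpow_mul (abs_nonneg _)]
    norm_num
    ring
  have hstep : ∀ᵐ τ ∂ν, (∫ x, Complex.exp
        (Complex.I * ((lam * Real.sqrt τ * |t - s| ^ H * x : ℝ) : ℂ)) ∂(gaussianReal 0 1))
      = ((Real.exp (-(c * τ)) : ℝ) : ℂ) := by
    filter_upwards [hae] with τ hτ
    rw [gauss_cf (lam * Real.sqrt τ * |t - s| ^ H), habs τ hτ.le]
  rw [integral_congr_ae hstep,
    show ∫ (τ:ℝ), ((Real.exp (-(c*τ)) : ℝ) : ℂ) ∂ν
      = ((∫ τ:ℝ, Real.exp (-(c*τ)) ∂ν : ℝ) : ℂ) from integral_ofReal]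
  congr 1
  -- series expansion of real integral
  have hgint : ∀ k : ℕ, Integrable (fun τ : ℝ => ((-c)^k / (Nat.factorial k : ℝ)) * τ^k) ν :=
    fun k => (hint k).const_mul _
  have hsw := (summable_wright hβ hbβ hα haα hastar hc0).mul_left (1/K)
  have hu_sum : Summable (fun k : ℕ => c^k / (Nat.factorial k : ℝ) * (∫ τ, τ^k ∂ν)) := by
    refine hsw.congr fun k => ?_
    rw [hmom k]
    ring
  have hnorm_eq : ∀ k : ℕ, ∫ τ, ‖((-c)^k / (Nat.factorial k : ℝ)) * τ^k‖ ∂ν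
      = c^k / (Nat.factorial k : ℝ) * (∫ τ, τ^k ∂ν) := by
    intro k
    rw [← MeasureTheory.integral_const_mul]
    refine integral_congr_ae ?_
    filter_upwards [hae] with τ hτ
    rw [norm_mul, norm_div, norm_pow, norm_pow, norm_neg]
    rw [Real.norm_of_nonneg hc0, Real.norm_of_nonneg (le_of_lt hτ),
      Real.norm_of_nonneg (Nat.cast_nonneg _)]
  have hexp' : ∀ τ : ℝ, Real.exp (-(c*τ)) = ∑' k : ℕ, ((-c)^k / (Nat.factorial k : ℝ)) * τ^k := by
    intro τ
    rw [Real.exp_eq_exp_ℝ, NormedSpace.exp_eq_tsum_div]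
    refine tsum_congr fun k => ?_
    rw [show -(c*τ) = (-c)*τ by ring, mul_pow]
    ring
  calc ∫ τ, Real.exp (-(c*τ)) ∂ν
      = ∫ τ, ∑' k : ℕ, ((-c)^k / (Nat.factorial k : ℝ)) * τ^k ∂ν :=
        integral_congr_ae (Filter.Eventually.of_forall fun τ => hexp' τ)
    _ = ∑' k : ℕ, ∫ τ, ((-c)^k / (Nat.factorial k : ℝ)) * τ^k ∂ν := by
        refine integral_tsum (fun k => ((continuous_const.mul (continuous_pow k)).aestronglyMeasurable)) ?_
        have heq : ∀ k : ℕ, ∫⁻ τ, ‖((-c)^k / (Nat.factorial k : ℝ)) * τ^k‖ₑ ∂ν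
            = ENNReal.ofReal (c^k / (Nat.factorial k : ℝ) * (∫ τ, τ^k ∂ν)) := by
          intro k
          rw [← hnorm_eq k]
          exact (MeasureTheory.ofReal_integral_norm_eq_lintegral_enorm (hgint k)).symm
        rw [tsum_congr heq,
          ← ENNReal.ofReal_tsum_of_nonneg (fun k => by rw [← hnorm_eq k]; positivity) hu_sum]
        exact ENNReal.ofReal_ne_top
    _ = ∑' k : ℕ, (1/K) * (((∏ i, Real.Gamma (b i + β i + β i * k))
          / (∏ j, Real.Gamma (a j + α j + α j * k)))
            * (-(lam ^ 2) * |t - s| ^ (2 * H) / 2) ^ k / (Nat.factorial k : ℝ)) := by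
        refine tsum_congr fun k => ?_
        rw [MeasureTheory.integral_const_mul, hmom k]
        have hPk : (∏ i, Real.Gamma (b i + β i * ((k:ℝ)+1)))
            = ∏ i, Real.Gamma (b i + β i + β i * k) := by
          refine Finset.prod_congr rfl fun i _ => ?_
          rw [show b i + β i * ((k:ℝ)+1) = b i + β i + β i * k by ring]
        have hQk : (∏ j, Real.Gamma (a j + α j * ((k:ℝ)+1)))
            = ∏ j, Real.Gamma (a j + α j + α j * k) := by
          refine Finset.prod_congr rfl fun j _ => ?_
          rw [show a j + α j * ((k:ℝ)+1) = a j + α j + α j * k by ring]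
        rw [hPk, hQk, show -(lam ^ 2) * |t - s| ^ (2 * H) / 2 = -c by rw [hc]; ring]
        ring
    _ = (1 / K) * ∑' k : ℕ,
          ((∏ i, Real.Gamma (b i + β i + β i * k)) / (∏ j, Real.Gamma (a j + α j + α j * k)))
            * (-(lam ^ 2) * |t - s| ^ (2 * H) / 2) ^ k / (Nat.factorial k : ℝ) := tsum_mul_left
end
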